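/- arXiv:2008.01939 — 6 statements merged into one kernel-verified Lean document; each statement's English description precedes it below -/
import Mathlib

section
/- (Proposition 2.1) Let H be a real Hilbert space, let σ > 0, and let (ε_n)_{n∈ℕ} be a family of vectors in H that are pairwise orthogonal with ‖ε_n‖² = σ² for every n. Let 0 < d < 1/2 and set ψ_j(d) = Γ(j+d)/(Γ(j+1)·Γ(d)). Then the series ∑_{j=0}^∞ ψ_j(d)·ε_j converges in H (the family j ↦ ψ_j(d)·ε_j is summable in the norm topology). -/
open Real
open scoped RealInnerProductSpace

private lemma psi_pos {d : ℝ} (hd0 : 0 < d) (j : ℕ) :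
    0 < Real.Gamma (j + d) / (Real.Gamma (j + 1) * Real.Gamma d) := by
  apply div_pos
  · exact Real.Gamma_pos_of_pos (by positivity)
  · exact mul_pos (Real.Gamma_pos_of_pos (by positivity)) (Real.Gamma_pos_of_pos hd0)

private lemma psi_succ {d : ℝ} (hd0 : 0 < d) (j : ℕ) :
    Real.Gamma ((j + 1 : ℕ) + d) / (Real.Gamma ((j + 1 : ℕ) + 1) * Real.Gamma d)
      = (Real.Gamma (j + d) / (Real.Gamma (j + 1) * Real.Gamma d))
        * (((j : ℝ) + d) / ((j : ℝ) + 1)) := by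
  have h1 : ((j + 1 : ℕ) : ℝ) + d = ((j : ℝ) + d) + 1 := by push_cast; ring
  have h2 : ((j + 1 : ℕ) : ℝ) + 1 = ((j : ℝ) + 1) + 1 := by push_cast; ring
  rw [h1, h2, Real.Gamma_add_one (by positivity), Real.Gamma_add_one (by positivity)]
  have hΓ1 : 0 < Real.Gamma ((j : ℝ) + 1) := Real.Gamma_pos_of_pos (by positivity)
  have hΓd : 0 < Real.Gamma d := Real.Gamma_pos_of_pos hd0
  field_simp

private lemma psi_le {d : ℝ} (hd0 : 0 < d) (hd : d < 1/2) (j : ℕ) :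
    Real.Gamma (j + d) / (Real.Gamma (j + 1) * Real.Gamma d)
      ≤ ((j : ℝ) + 1) ^ (d - 1) := by
  induction j with
  | zero =>
      simp only [Nat.cast_zero, zero_add, Real.Gamma_one, one_mul, div_self
        (ne_of_gt (Real.Gamma_pos_of_pos hd0)), Real.one_rpow]
      exact le_refl 1
  | succ j ih =>
      set x : ℝ := (j : ℝ) with hx
      have hx0 : 0 ≤ x := Nat.cast_nonneg j
      have hx1 : (0:ℝ) < x + 1 := by linarith
      have hx2 : (0:ℝ) < x + 2 := by linarith
      have hxd : (0:ℝ) < x + d := by linarith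
      -- key inequality : (x+d) * (x+2)^(1-d) ≤ (x+1) * (x+1)^(1-d)
      have hbern : (1 + 1/(x+1)) ^ (1 - d) ≤ 1 + (1 - d) * (1/(x+1)) := by
        have := rpow_one_add_le_one_add_mul_self
          (s := 1/(x+1)) ((by positivity : (0:ℝ) ≤ 1/(x+1)).trans' (by norm_num))
          (p := 1 - d) (by linarith) (by linarith)
        linarith [this]
      have hsplit : (x + 2) ^ (1 - d) = (x+1) ^ (1-d) * (1 + 1/(x+1)) ^ (1-d) := by
        rw [← Real.mul_rpow (by positivity) (by positivity)]
        congr 1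
        field_simp
        ring
      have key : (x + d) * (x + 2) ^ (1 - d) ≤ (x + 1) * (x + 1) ^ (1 - d) := by
        have h1 : (x + d) * (x + 2) ^ (1 - d)
            ≤ (x + d) * ((x+1) ^ (1-d) * (1 + (1 - d) * (1/(x+1)))) := by
          rw [hsplit]
          apply mul_le_mul_of_nonneg_left _ hxd.le
          exact mul_le_mul_of_nonneg_left hbern (by positivity)
        refine h1.trans ?_
        rw [mul_comm (x+1) ((x+1)^(1-d)), mul_comm (x+d), mul_assoc]
        apply mul_le_mul_of_nonneg_left _ (by positivity)
        have hquad : (x + d) * (1 + (1 - d) * (1/(x+1))) ≤ x + 1 := by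
          have h : (x + d) * (1 + (1 - d) * (1/(x+1)))
              = ((x+d)*(x+1) + (x+d)*(1-d))/(x+1) := by field_simp
          rw [h, div_le_iff₀ hx1]
          nlinarith [sq_nonneg (1 - d)]
        linarith
      -- now the inductive step
      have hψ := psi_succ hd0 (d := d) j
      rw [hψ]
      have hstep : ((x : ℝ) + 1) ^ (d - 1) * ((x + d) / (x + 1))
          ≤ (x + 2) ^ (d - 1) := by
        have e1 : (x + 1) ^ (d - 1) = ((x + 1) ^ (1 - d))⁻¹ := by
          rw [← Real.rpow_neg hx1.le]; ring_nf
        have e2 : (x + 2) ^ (d - 1) = ((x + 2) ^ (1 - d))⁻¹ := by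
          rw [← Real.rpow_neg hx2.le]; ring_nf
        rw [e1, e2]
        have hp1 : (0:ℝ) < (x + 1) ^ (1 - d) := Real.rpow_pos_of_pos hx1 _
        have hp2 : (0:ℝ) < (x + 2) ^ (1 - d) := Real.rpow_pos_of_pos hx2 _
        have : ((x + 1) ^ (1 - d))⁻¹ * ((x + d) / (x + 1))
            = (x + d) / ((x + 1) ^ (1 - d) * (x + 1)) := by
          field_simp
        rw [this, inv_eq_one_div, div_le_div_iff₀ (by positivity) hp2]
        nlinarith [key]
      calc Real.Gamma (↑j + d) / (Real.Gamma (↑j + 1) * Real.Gamma d) * ((↑j + d) / (↑j + 1))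
          ≤ ((x : ℝ) + 1) ^ (d - 1) * ((x + d) / (x + 1)) := by
            apply mul_le_mul_of_nonneg_right ih (by positivity)
        _ ≤ (x + 2) ^ (d - 1) := hstep
        _ = ((((j + 1 : ℕ)) : ℝ) + 1) ^ (d - 1) := by push_cast; ring_nf; rw [hx]

private lemma psi_sq_summable {d : ℝ} (hd0 : 0 < d) (hd : d < 1/2) :
    Summable (fun j : ℕ =>
      (Real.Gamma (j + d) / (Real.Gamma (j + 1) * Real.Gamma d)) ^ 2) := by
  have hmaj : Summable (fun j : ℕ => ((j : ℝ) + 1) ^ ((d - 1) * 2)) := by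
    have h : Summable (fun n : ℕ => (n : ℝ) ^ ((d - 1) * 2)) :=
      Real.summable_nat_rpow.mpr (by linarith)
    have := (summable_nat_add_iff 1).2 h
    simpa [Nat.cast_add, Nat.cast_one] using this
  refine Summable.of_nonneg_of_le (fun j => sq_nonneg _) (fun j => ?_) hmaj
  have h1 := psi_le hd0 hd j
  have h0 := (psi_pos hd0 j).le
  calc (Real.Gamma (j + d) / (Real.Gamma (j + 1) * Real.Gamma d)) ^ 2
      ≤ (((j : ℝ) + 1) ^ (d - 1)) ^ 2 := by
        apply pow_le_pow_left₀ h0 h1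
    _ = ((j : ℝ) + 1) ^ ((d - 1) * 2) := by
        rw [← Real.rpow_natCast (((j : ℝ) + 1) ^ (d - 1)) 2,
          ← Real.rpow_mul (by positivity)]
        norm_num

/-- Proposition 2.1: In a real Hilbert space, if `(ε_n)` are pairwise
orthogonal with `‖ε_n‖² = σ²` and `0 < d < 1/2`, then the series
`∑ ψ_j(d) • ε_j` converges in `H`, where `ψ_j(d) = Γ(j+d)/(Γ(j+1)·Γ(d))`. -/
theorem ptvarfima_ma_summable
    {H : Type*} [NormedAddCommGroup H] [InnerProductSpace ℝ H] [CompleteSpace H]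
    (σ : ℝ) (hσ : 0 < σ) (ε : ℕ → H)
    (horth : ∀ m n : ℕ, m ≠ n → ⟪ε m, ε n⟫ = 0)
    (hnorm : ∀ n : ℕ, ‖ε n‖ ^ 2 = σ ^ 2)
    (d : ℝ) (hd0 : 0 < d) (hd : d < 1/2) :
    Summable (fun j : ℕ =>
      (Real.Gamma (j + d) / (Real.Gamma (j + 1) * Real.Gamma d)) • ε j) := by
  set ψ : ℕ → ℝ := fun j => Real.Gamma (j + d) / (Real.Gamma (j + 1) * Real.Gamma d) with hψ
  have hεnorm : ∀ n, ‖ε n‖ = σ := by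
    intro n
    have : Real.sqrt (‖ε n‖ ^ 2) = Real.sqrt (σ ^ 2) := by rw [hnorm n]
    rwa [Real.sqrt_sq (norm_nonneg _), Real.sqrt_sq hσ.le] at this
  set e : ℕ → H := fun n => σ⁻¹ • ε n with he
  have hon : Orthonormal ℝ e := by
    constructor
    · intro n
      simp only [he, norm_smul, norm_inv, Real.norm_eq_abs, abs_of_pos hσ, hεnorm n]
      field_simp
    · intro i j hij
      simp only [he, real_inner_smul_left, real_inner_smul_right, horth i j hij, mul_zero]
  have hOF := hon.orthogonalFamily
  have hsum := (hOF.summable_iff_norm_sq_summable (fun j => ψ j * σ)).2 ?_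
  · have heq : ∀ j, (LinearIsometry.toSpanSingleton ℝ H (hon.1 j)) (ψ j * σ) = ψ j • ε j := by
      intro j
      simp only [LinearIsometry.toSpanSingleton_apply, he, smul_smul]
      congr 1
      field_simp
    simpa only [heq] using hsum
  · have : (fun j => ‖ψ j * σ‖ ^ 2) = fun j => (ψ j) ^ 2 * σ ^ 2 := by
      funext j
      rw [norm_mul, mul_pow]
      simp [Real.norm_eq_abs, sq_abs]
    rw [this]
    exact (psi_sq_summable hd0 hd).mul_right _
end

section
/- (Gauss summation at z = 1, used in the derivation of the autocovariance) Let a, b, c be real numbers with a > 0, b > 0, c > 0 and c > a + b. Then the series ∑_{j=0}^∞ Γ(a+j)·Γ(b+j) / (Γ(c+j)·Γ(j+1)) converges and equals Γ(a)·Γ(b)·Γ(c-a-b) / (Γ(c-a)·Γ(c-b)). -/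
open Real

open MeasureTheory Set Nat

private lemma betaIntegrableOn {p q : ℝ} (hp : 0 < p) (hq : 0 < q) :
    IntegrableOn (fun x : ℝ => x ^ (p - 1) * (1 - x) ^ (q - 1)) (Ioo 0 1) := by
  have h := (Complex.betaIntegral_convergent (u := (p : ℂ)) (v := (q : ℂ))
    (by simpa using hp) (by simpa using hq))
  rw [intervalIntegrable_iff_integrableOn_Ioc_of_le zero_le_one] at h
  have := h.re
  have this2 : IntegrableOn (fun x : ℝ => Complex.re ((x:ℂ) ^ ((p:ℂ) - 1) * (1 - (x:ℂ)) ^ ((q:ℂ) - 1))) (Ioc 0 1) := this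
  refine (integrableOn_Ioc_iff_integrableOn_Ioo enorm_ne_top).mp (this2.congr_fun (fun x hx => ?_) measurableSet_Ioc)
  have hx0 : (0:ℝ) ≤ x := hx.1.le
  have hx1 : (0:ℝ) ≤ 1 - x := by linarith [hx.2]
  show (Complex.re _) = _
  rw [show ((p:ℂ) - 1) = ((p - 1 : ℝ) : ℂ) by push_cast; ring,
    show ((q:ℂ) - 1) = ((q - 1 : ℝ) : ℂ) by push_cast; ring,
    ← Complex.ofReal_cpow hx0, show ((1:ℂ) - (x:ℂ)) = ((1 - x : ℝ) : ℂ) by push_cast; ring,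
    ← Complex.ofReal_cpow hx1, ← Complex.ofReal_mul, Complex.ofReal_re]

private lemma betaIntegral_real {p q : ℝ} (hp : 0 < p) (hq : 0 < q) :
    ∫ x in Ioo (0:ℝ) 1, x ^ (p - 1) * (1 - x) ^ (q - 1)
      = Real.Gamma p * Real.Gamma q / Real.Gamma (p + q) := by
  have hG := Complex.Gamma_mul_Gamma_eq_betaIntegral (s := (p : ℂ)) (t := (q : ℂ))
    (by simpa using hp) (by simpa using hq)
  have hbeta : Complex.betaIntegral (p : ℂ) (q : ℂ)
      = ((∫ x in Ioo (0:ℝ) 1, x ^ (p - 1) * (1 - x) ^ (q - 1) : ℝ) : ℂ) := by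
    rw [Complex.betaIntegral, intervalIntegral.integral_of_le zero_le_one,
      ← integral_Ioc_eq_integral_Ioo (f := fun x : ℝ => x ^ (p - 1) * (1 - x) ^ (q - 1))]
    rw [show (∫ x in Ioc (0:ℝ) 1, (x:ℂ) ^ ((p:ℂ) - 1) * (1 - (x:ℂ)) ^ ((q:ℂ) - 1))
        = ∫ x in Ioc (0:ℝ) 1, ((x ^ (p - 1) * (1 - x) ^ (q - 1) : ℝ) : ℂ) from
      setIntegral_congr_fun measurableSet_Ioc (fun x hx => ?_)]
    · exact integral_ofReal
    · have hx0 : (0:ℝ) ≤ x := hx.1.le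
      have hx1 : (0:ℝ) ≤ 1 - x := by linarith [hx.2]
      rw [show ((p:ℂ) - 1) = ((p - 1 : ℝ) : ℂ) by push_cast; ring,
        show ((q:ℂ) - 1) = ((q - 1 : ℝ) : ℂ) by push_cast; ring,
        ← Complex.ofReal_cpow hx0, show ((1:ℂ) - (x:ℂ)) = ((1 - x : ℝ) : ℂ) by push_cast; ring,
        ← Complex.ofReal_cpow hx1, ← Complex.ofReal_mul]
  rw [hbeta, ← Complex.ofReal_add, Complex.Gamma_ofReal, Complex.Gamma_ofReal,
    Complex.Gamma_ofReal, ← Complex.ofReal_mul, ← Complex.ofReal_mul] at hG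
  have := Complex.ofReal_inj.mp hG
  have hGpq : Real.Gamma (p + q) ≠ 0 := (Real.Gamma_pos_of_pos (by linarith)).ne'
  field_simp
  linarith [this]

private lemma lbeta {p q : ℝ} (hp : 0 < p) (hq : 0 < q) :
    ∫⁻ x in Ioo (0:ℝ) 1, ENNReal.ofReal (x ^ (p - 1) * (1 - x) ^ (q - 1))
      = ENNReal.ofReal (Real.Gamma p * Real.Gamma q / Real.Gamma (p + q)) := by
  rw [← betaIntegral_real hp hq,
    ← ofReal_integral_eq_lintegral_ofReal (betaIntegrableOn hp hq)]
  filter_upwards [ae_restrict_mem measurableSet_Ioo] with x hx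
  exact mul_nonneg (Real.rpow_nonneg hx.1.le _) (Real.rpow_nonneg (by linarith [hx.2]) _)

private lemma gammaScaledIntegrableOn {p r : ℝ} (hp : 0 < p) (hr : 0 < r) :
    IntegrableOn (fun s : ℝ => s ^ (p - 1) * Real.exp (-(r * s))) (Ioi 0) := by
  have h := Real.GammaIntegral_convergent hp
  have h2 : IntegrableOn (fun s : ℝ => Real.exp (-(r * s)) * (r * s) ^ (p - 1)) (Ioi 0) := by
    have := (integrableOn_Ioi_comp_mul_left_iff
      (fun x : ℝ => Real.exp (-x) * x ^ (p - 1)) 0 hr).mpr (by simpa using h)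
    simpa using this
  have h3 : IntegrableOn (fun s : ℝ => (r ^ (p-1))⁻¹ * (Real.exp (-(r * s)) * (r * s) ^ (p - 1))) (Ioi 0) :=
    h2.const_mul _
  refine (h3.congr_fun (fun s hs => ?_) measurableSet_Ioi)
  have hs0 : (0:ℝ) < s := hs
  beta_reduce
  rw [Real.mul_rpow hr.le hs0.le]
  field_simp [(Real.rpow_pos_of_pos hr (p-1)).ne']

private lemma lgamma {p r : ℝ} (hp : 0 < p) (hr : 0 < r) :
    ∫⁻ s in Ioi (0:ℝ), ENNReal.ofReal (s ^ (p - 1) * Real.exp (-(r * s)))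
      = ENNReal.ofReal ((1 / r) ^ p * Real.Gamma p) := by
  rw [← Real.integral_rpow_mul_exp_neg_mul_Ioi hp hr,
    ← ofReal_integral_eq_lintegral_ofReal (gammaScaledIntegrableOn hp hr)]
  filter_upwards [ae_restrict_mem measurableSet_Ioi] with s hs
  exact mul_nonneg (Real.rpow_nonneg (le_of_lt hs) _) (Real.exp_nonneg _)

private lemma lbinom {a t : ℝ} (ha : 0 < a) (ht : 0 < t) (ht1 : t < 1) :
    ∑' j : ℕ, ENNReal.ofReal (Real.Gamma (a + j) / (j ! : ℝ) * t ^ j)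
      = ENNReal.ofReal (Real.Gamma a * (1 - t) ^ (-a)) := by
  have key : ∀ j : ℕ, ENNReal.ofReal (Real.Gamma (a + j) / (j ! : ℝ) * t ^ j)
      = ∫⁻ s in Ioi (0:ℝ),
          ENNReal.ofReal (s ^ (a - 1) * Real.exp (-s) * ((s * t) ^ j / (j ! : ℝ))) := by
    intro j
    have hg := lgamma (p := a + j) (r := 1) (by positivity) one_pos
    simp only [one_div, inv_one, Real.one_rpow, one_mul] at hg
    have hc : ENNReal.ofReal (t ^ j / (j ! : ℝ)) ≠ ⊤ := ENNReal.ofReal_ne_top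
    calc ENNReal.ofReal (Real.Gamma (a + j) / (j ! : ℝ) * t ^ j)
        = ENNReal.ofReal (t ^ j / (j ! : ℝ)) * ENNReal.ofReal (Real.Gamma (a + j)) := by
          rw [← ENNReal.ofReal_mul (by positivity)]
          congr 1; ring
      _ = ENNReal.ofReal (t ^ j / (j ! : ℝ)) *
            ∫⁻ s in Ioi (0:ℝ), ENNReal.ofReal (s ^ (a + j - 1) * Real.exp (-s)) := by
          rw [hg]
      _ = ∫⁻ s in Ioi (0:ℝ), ENNReal.ofReal (t ^ j / (j ! : ℝ)) *
            ENNReal.ofReal (s ^ (a + j - 1) * Real.exp (-s)) := by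
          rw [lintegral_const_mul' _ _ hc]
      _ = _ := by
          refine setLIntegral_congr_fun_ae measurableSet_Ioi (ae_of_all _ fun s hs => ?_)
          rw [← ENNReal.ofReal_mul (by positivity)]
          congr 1
          have hs0 : (0:ℝ) < s := hs
          rw [show a + (j:ℝ) - 1 = (a - 1) + (j:ℝ) by ring, Real.rpow_add hs0,
            Real.rpow_natCast, mul_pow]
          field_simp
  simp_rw [key]
  rw [← lintegral_tsum (fun j => (by fun_prop : Measurable fun s : ℝ =>
    ENNReal.ofReal (s ^ (a - 1) * Real.exp (-s) * ((s * t) ^ j / (j ! : ℝ)))).aemeasurable)]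
  have hpt : ∀ s ∈ Ioi (0:ℝ),
      ∑' j : ℕ, ENNReal.ofReal (s ^ (a - 1) * Real.exp (-s) * ((s * t) ^ j / (j ! : ℝ)))
        = ENNReal.ofReal (s ^ (a - 1) * Real.exp (-((1 - t) * s))) := by
    intro s hs
    have hs0 : (0:ℝ) < s := hs
    have h1 : ∀ j : ℕ, ENNReal.ofReal (s ^ (a - 1) * Real.exp (-s) * ((s * t) ^ j / (j ! : ℝ)))
        = ENNReal.ofReal (s ^ (a - 1) * Real.exp (-s)) *
            ENNReal.ofReal ((s * t) ^ j / (j ! : ℝ)) := fun j =>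
      ENNReal.ofReal_mul (by positivity)
    simp_rw [h1]
    rw [ENNReal.tsum_mul_left, ← ENNReal.ofReal_tsum_of_nonneg
      (fun j => by positivity) (Real.summable_pow_div_factorial _)]
    rw [show (∑' j : ℕ, (s * t) ^ j / (j ! : ℝ)) = Real.exp (s * t) by
      rw [Real.exp_eq_exp_ℝ, NormedSpace.exp_eq_tsum_div]]
    rw [← ENNReal.ofReal_mul (by positivity)]
    congr 1
    rw [mul_assoc, ← Real.exp_add]
    ring_nf
  rw [setLIntegral_congr_fun_ae measurableSet_Ioi (ae_of_all _ hpt),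
    lgamma ha (by linarith : (0:ℝ) < 1 - t)]
  congr 1
  rw [one_div, Real.inv_rpow (by linarith), ← Real.rpow_neg (by linarith)]
  ring

/-- Gauss summation at z = 1: For reals `a, b, c > 0` with `c > a + b`,
`∑_{j=0}^∞ Γ(a+j)Γ(b+j)/(Γ(c+j)Γ(j+1)) = Γ(a)Γ(b)Γ(c-a-b)/(Γ(c-a)Γ(c-b))`. -/
theorem gauss_summation (a b c : ℝ) (ha : 0 < a) (hb : 0 < b) (hc : 0 < c)
    (hcab : a + b < c) :
    HasSum
      (fun j : ℕ =>
        Real.Gamma (a + j) * Real.Gamma (b + j) /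
          (Real.Gamma (c + j) * Real.Gamma (j + 1)))
      (Real.Gamma a * Real.Gamma b * Real.Gamma (c - a - b) /
        (Real.Gamma (c - a) * Real.Gamma (c - b))) := by
  set f : ℕ → ℝ := fun j =>
    Real.Gamma (a + j) * Real.Gamma (b + j) / (Real.Gamma (c + j) * Real.Gamma (j + 1)) with hf
  set R : ℝ := Real.Gamma a * Real.Gamma b * Real.Gamma (c - a - b) /
    (Real.Gamma (c - a) * Real.Gamma (c - b)) with hR
  have hGa := Real.Gamma_pos_of_pos ha
  have hGb := Real.Gamma_pos_of_pos hb
  have hGcab := Real.Gamma_pos_of_pos (by linarith : (0:ℝ) < c - a - b)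
  have hGca := Real.Gamma_pos_of_pos (by linarith : (0:ℝ) < c - a)
  have hGcb := Real.Gamma_pos_of_pos (by linarith : (0:ℝ) < c - b)
  set K : ℝ := Real.Gamma (c - b) with hK
  have hfnn : ∀ j, 0 ≤ f j := by
    intro j
    have h1 := Real.Gamma_pos_of_pos (by positivity : (0:ℝ) < a + j)
    have h2 := Real.Gamma_pos_of_pos (by positivity : (0:ℝ) < b + j)
    have h3 := Real.Gamma_pos_of_pos (by positivity : (0:ℝ) < c + j)
    have h4 := Real.Gamma_pos_of_pos (by positivity : (0:ℝ) < (j:ℝ) + 1)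
    positivity
  have hRnn : 0 ≤ R := by positivity
  -- the key ENNReal computation
  have key : ∑' j : ℕ, ENNReal.ofReal (f j) = ENNReal.ofReal R := by
    have hKne : ENNReal.ofReal K ≠ 0 := (ENNReal.ofReal_pos.mpr hGcb).ne'
    have hKnt : ENNReal.ofReal K ≠ ⊤ := ENNReal.ofReal_ne_top
    -- step 1: per-j beta representation
    have step1 : ∀ j : ℕ, ENNReal.ofReal (f j)
        = (ENNReal.ofReal K)⁻¹ * ∫⁻ t in Ioo (0:ℝ) 1,
            ENNReal.ofReal (Real.Gamma (a + j) / (j ! : ℝ) *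
              (t ^ (b + j - 1) * (1 - t) ^ (c - b - 1))) := by
      intro j
      have hGaj := Real.Gamma_pos_of_pos (by positivity : (0:ℝ) < a + j)
      have hGbj := Real.Gamma_pos_of_pos (by positivity : (0:ℝ) < b + j)
      have hGcj := Real.Gamma_pos_of_pos (by positivity : (0:ℝ) < c + j)
      have hfac : (0:ℝ) < (j ! : ℝ) := by positivity
      have hb1 : ∫⁻ t in Ioo (0:ℝ) 1,
          ENNReal.ofReal (t ^ (b + j - 1) * (1 - t) ^ (c - b - 1))
          = ENNReal.ofReal (Real.Gamma (b + j) * K / Real.Gamma (c + j)) := by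
        have := lbeta (p := b + j) (q := c - b) (by positivity) (by linarith)
        rw [show (b + (j:ℝ)) + (c - b) = c + j by ring] at this
        simpa using this
      have : ∫⁻ t in Ioo (0:ℝ) 1,
          ENNReal.ofReal (Real.Gamma (a + j) / (j ! : ℝ) *
            (t ^ (b + j - 1) * (1 - t) ^ (c - b - 1)))
          = ENNReal.ofReal (Real.Gamma (a + j) / (j ! : ℝ)) *
            ENNReal.ofReal (Real.Gamma (b + j) * K / Real.Gamma (c + j)) := by
        rw [← hb1, ← lintegral_const_mul' _ _ ENNReal.ofReal_ne_top]
        refine setLIntegral_congr_fun_ae measurableSet_Ioo (ae_of_all _ fun t htm => ?_)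
        rw [← ENNReal.ofReal_mul (by positivity)]
      rw [this, ← ENNReal.ofReal_mul (by positivity)]
      rw [show Real.Gamma (a + j) / (j ! : ℝ) * (Real.Gamma (b + j) * K / Real.Gamma (c + j))
          = K * f j by
        rw [hf]
        simp only [Real.Gamma_nat_eq_factorial]
        field_simp]
      rw [ENNReal.ofReal_mul hGcb.le, ← mul_assoc, ENNReal.inv_mul_cancel hKne hKnt, one_mul]
    simp_rw [step1]
    have swap : ∑' j : ℕ, ∫⁻ t in Ioo (0:ℝ) 1,
        ENNReal.ofReal (Real.Gamma (a + j) / (j ! : ℝ) *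
          (t ^ (b + j - 1) * (1 - t) ^ (c - b - 1)))
        = ∫⁻ t in Ioo (0:ℝ) 1, ∑' j : ℕ,
            ENNReal.ofReal (Real.Gamma (a + j) / (j ! : ℝ) *
              (t ^ (b + j - 1) * (1 - t) ^ (c - b - 1))) :=
      (lintegral_tsum (fun j : ℕ => (by fun_prop : Measurable fun t : ℝ =>
        ENNReal.ofReal (Real.Gamma (a + j) / (j ! : ℝ) *
          (t ^ (b + j - 1) * (1 - t) ^ (c - b - 1)))).aemeasurable)).symm
    rw [ENNReal.tsum_mul_left, swap]
    -- step 3: pointwise sum over j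
    have step3 : ∀ t ∈ Ioo (0:ℝ) 1,
        ∑' j : ℕ, ENNReal.ofReal (Real.Gamma (a + j) / (j ! : ℝ) *
            (t ^ (b + j - 1) * (1 - t) ^ (c - b - 1)))
          = ENNReal.ofReal (Real.Gamma a) *
              ENNReal.ofReal (t ^ (b - 1) * (1 - t) ^ (c - a - b - 1)) := by
      intro t htm
      obtain ⟨ht0, ht1⟩ := htm
      have h1t : (0:ℝ) < 1 - t := by linarith
      have e1 : ∀ j : ℕ, ENNReal.ofReal (Real.Gamma (a + j) / (j ! : ℝ) *
            (t ^ (b + j - 1) * (1 - t) ^ (c - b - 1)))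
          = ENNReal.ofReal (Real.Gamma (a + j) / (j ! : ℝ) * t ^ j) *
              ENNReal.ofReal (t ^ (b - 1) * (1 - t) ^ (c - b - 1)) := by
        intro j
        have hGaj := Real.Gamma_pos_of_pos (by positivity : (0:ℝ) < a + j)
        rw [← ENNReal.ofReal_mul (by positivity)]
        congr 1
        rw [show b + (j:ℝ) - 1 = (b - 1) + (j:ℝ) by ring, Real.rpow_add ht0,
          Real.rpow_natCast]
        ring
      simp_rw [e1]
      rw [ENNReal.tsum_mul_right, lbinom ha ht0 ht1,
        ENNReal.ofReal_mul (by positivity), mul_assoc, ← ENNReal.ofReal_mul (by positivity)]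
      congr 2
      rw [show c - a - b - 1 = -a + (c - b - 1) by ring, Real.rpow_add h1t]
      ring
    rw [setLIntegral_congr_fun_ae measurableSet_Ioo (ae_of_all _ step3),
      lintegral_const_mul' _ _ ENNReal.ofReal_ne_top]
    have hb2 := lbeta (p := b) (q := c - a - b) hb (by linarith)
    rw [show b + (c - a - b) = c - a by ring] at hb2
    rw [hb2, ← ENNReal.ofReal_mul hGa.le]
    rw [show Real.Gamma a * (Real.Gamma b * Real.Gamma (c - a - b) / Real.Gamma (c - a))
        = K * R by rw [hR, hK]; field_simp; ring; exact (mul_inv_cancel₀ hGcb.ne').symm]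
    rw [ENNReal.ofReal_mul hGcb.le, ← mul_assoc, ENNReal.inv_mul_cancel hKne hKnt, one_mul]
  -- conclude
  have hsumm : Summable f := by
    have h := ENNReal.summable_toReal (by rw [key]; exact ENNReal.ofReal_ne_top)
    refine h.congr fun j => ?_
    exact ENNReal.toReal_ofReal (hfnn j)
  have htsum : ∑' j, f j = R := by
    have h := congrArg ENNReal.toReal key
    rw [ENNReal.tsum_toReal_eq (fun j => ENNReal.ofReal_ne_top), ENNReal.toReal_ofReal hRnn] at h
    calc ∑' j, f j = ∑' j, (ENNReal.ofReal (f j)).toReal := by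
          exact tsum_congr fun j => (ENNReal.toReal_ofReal (hfnn j)).symm
      _ = R := h
  exact htsum ▸ hsumm.hasSum
end

section
/- (Closed form of the autocovariance series, general lag) Let d₁, d₂ be real numbers with 0 < d₁ < 1/2 and 0 < d₂ < 1/2, let h be a natural number, and set ψ_j(d) = Γ(j+d)/(Γ(j+1)·Γ(d)). Then the series ∑_{j=0}^∞ ψ_j(d₁)·ψ_{j+h}(d₂) converges and equals Γ(1-d₁-d₂)·Γ(d₂+h) / (Γ(d₂)·Γ(1-d₂)·Γ(1+h-d₁)). -/
open Real

open Finset Filter Topology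

namespace Autocov

/-- Ascending factorial `x (x+1) ⋯ (x+k-1)`. -/
noncomputable def asc (x : ℝ) (k : ℕ) : ℝ := ∏ i ∈ Finset.range k, (x + i)

lemma asc_zero (x : ℝ) : asc x 0 = 1 := by simp [asc]

lemma asc_succ (x : ℝ) (k : ℕ) : asc x (k + 1) = asc x k * (x + k) := by
  simp [asc, Finset.prod_range_succ]

lemma asc_succ' (x : ℝ) (k : ℕ) : asc x (k + 1) = x * asc (x + 1) k := by
  rw [asc, Finset.prod_range_succ']
  have h1 : ∀ i ∈ Finset.range k, (x + ((i : ℕ) + 1 : ℕ)) = (x + 1) + (i : ℝ) := by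
    intro i _; push_cast; ring
  rw [Finset.prod_congr rfl h1]
  simp [asc]
  ring

lemma asc_pos {x : ℝ} (hx : 0 < x) (k : ℕ) : 0 < asc x k :=
  Finset.prod_pos fun i _ => by positivity

lemma asc_nonneg {x : ℝ} (hx : 0 < x) (k : ℕ) : 0 ≤ asc x k := (asc_pos hx k).le

lemma asc_mono {x y : ℝ} (hx : 0 < x) (hxy : x ≤ y) (k : ℕ) : asc x k ≤ asc y k :=
  Finset.prod_le_prod (fun i _ => by positivity) (fun i _ => by linarith)

lemma asc_one (k : ℕ) : asc 1 k = (Nat.factorial k : ℝ) := by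
  induction k with
  | zero => simp [asc_zero]
  | succ n ih => rw [asc_succ, ih, Nat.factorial_succ]; push_cast; ring

lemma Gamma_asc {x : ℝ} (hx : 0 < x) (k : ℕ) :
    Real.Gamma (k + x) = asc x k * Real.Gamma x := by
  induction k with
  | zero => simp [asc_zero]
  | succ n ih =>
    have : ((n : ℝ) + 1 + x) = ((n : ℝ) + x) + 1 := by ring
    push_cast
    rw [this, Real.Gamma_add_one (by positivity), ih, asc_succ]
    ring

lemma sum_inv_ge {x : ℝ} (hx : 0 < x) (k : ℕ) :
    Real.log (x + k) - Real.log x ≤ ∑ i ∈ Finset.range k, 1 / (x + i) := by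
  induction k with
  | zero => simp
  | succ n ih =>
    rw [Finset.sum_range_succ]
    have hxn : (0:ℝ) < x + n := by positivity
    have h1 : Real.log (x + (n+1)) - Real.log (x + n) ≤ 1 / (x + n) := by
      have := Real.log_le_sub_one_of_pos (x := (x + (n+1)) / (x + n)) (by positivity)
      rw [Real.log_div (by positivity) (by positivity)] at this
      have h2 : (x + (n+1)) / (x + n) - 1 = 1 / (x + n) := by field_simp; ring
      linarith [this, h2 ▸ this]
    push_cast
    push_cast at ih h1
    linarith

lemma asc_ratio_le {b c : ℝ} (hb : 0 < b) (hbc : b < c) (k : ℕ) :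
    asc b k ≤ asc c k * (c / (c + k)) ^ (c - b) := by
  have hc : 0 < c := hb.trans hbc
  have hck : (0:ℝ) < c + k := by positivity
  have key : asc b k = asc c k * ∏ i ∈ Finset.range k, ((b + i) / (c + i)) := by
    rw [asc, asc, ← Finset.prod_mul_distrib]
    refine Finset.prod_congr rfl fun i _ => ?_
    have : (0:ℝ) < c + i := by positivity
    field_simp
  rw [key]
  apply mul_le_mul_of_nonneg_left _ (asc_nonneg hc k)
  have step1 : ∏ i ∈ Finset.range k, ((b + i) / (c + i)) ≤
      ∏ i ∈ Finset.range k, Real.exp (-((c - b) / (c + i))) := by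
    refine Finset.prod_le_prod (fun i _ => by positivity) (fun i _ => ?_)
    have hci : (0:ℝ) < c + i := by positivity
    have h1 : (b + i) / (c + i) = 1 + -((c - b)/(c + i)) := by field_simp; ring
    rw [h1]
    simpa [add_comm] using Real.add_one_le_exp (-((c - b)/(c + i)))
  rw [← Real.exp_sum] at step1
  have step2 : ∑ i ∈ Finset.range k, -((c - b) / (c + i)) ≤
      (c - b) * Real.log (c / (c + k)) := by
    rw [Real.log_div (by positivity) (by positivity)]
    have := sum_inv_ge hc k
    have hsum : ∑ i ∈ Finset.range k, -((c - b) / (c + i))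
        = -((c - b) * ∑ i ∈ Finset.range k, 1 / (c + i)) := by
      rw [Finset.mul_sum, ← Finset.sum_neg_distrib]
      exact Finset.sum_congr rfl fun i _ => by rw [mul_one_div]
    rw [hsum]
    nlinarith [sub_pos.2 hbc]
  calc ∏ i ∈ Finset.range k, ((b + i) / (c + i))
      ≤ Real.exp (∑ i ∈ Finset.range k, -((c - b) / (c + i))) := step1
    _ ≤ Real.exp ((c - b) * Real.log (c / (c + k))) := Real.exp_le_exp.2 step2
    _ = (c / (c + k)) ^ (c - b) := by
        rw [Real.rpow_def_of_pos (by positivity)]; ring_nf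

end Autocov

namespace Autocov

/-- Hypergeometric term `(a)_k (b)_k / ((c)_k k!)`. -/
noncomputable def u (a b c : ℝ) (k : ℕ) : ℝ :=
  asc a k * asc b k / (asc c k * (Nat.factorial k : ℝ))

lemma u_pos {a b c : ℝ} (ha0 : 0 < a) (hb0 : 0 < b) (hc0 : 0 < c) (k : ℕ) :
    0 < u a b c k := by
  have h1 := asc_pos ha0 k; have h2 := asc_pos hb0 k; have h3 := asc_pos hc0 k
  have h4 : (0:ℝ) < (Nat.factorial k : ℝ) := by positivity
  exact div_pos (mul_pos h1 h2) (mul_pos h3 h4)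

lemma u_zero (a b c : ℝ) : u a b c 0 = 1 := by simp [u, asc_zero]

lemma u_succ {c : ℝ} (a b : ℝ) (hc0 : 0 < c) (k : ℕ) :
    u a b c (k + 1) = u a b c k * ((a + k) * (b + k) / ((c + k) * (1 + k))) := by
  have h3 : asc c k ≠ 0 := (asc_pos hc0 k).ne'
  have h4 : (Nat.factorial k : ℝ) ≠ 0 := by positivity
  have hck : c + (k:ℝ) ≠ 0 := by positivity
  have hk1 : (1:ℝ) + k ≠ 0 := by positivity
  rw [u, u, asc_succ, asc_succ, asc_succ, Nat.factorial_succ]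
  push_cast
  field_simp
  ring

lemma asc_add_one {c : ℝ} (hc0 : 0 < c) (k : ℕ) :
    asc (c + 1) k = asc c k * (c + k) / c := by
  rw [eq_div_iff hc0.ne']
  induction k with
  | zero => simp [asc_zero]
  | succ n ih =>
    rw [asc_succ, asc_succ]
    push_cast
    linear_combination (c + 1 + (n:ℝ)) * ih

lemma u_cSucc {c : ℝ} (a b : ℝ) (hc0 : 0 < c) (k : ℕ) :
    u a b (c + 1) k = u a b c k * (c / (c + k)) := by
  have h3 : asc c k ≠ 0 := (asc_pos hc0 k).ne'
  have h4 : (Nat.factorial k : ℝ) ≠ 0 := by positivity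
  have hck : c + (k:ℝ) ≠ 0 := by positivity
  rw [u, u, asc_add_one hc0]
  field_simp

/-- The Gosper-style telescoping identity behind the contiguous relation. -/
lemma u_telescope {c : ℝ} (a b : ℝ) (hc0 : 0 < c) (k : ℕ) :
    (c - a - b) * u a b c k - ((c - a) * (c - b) / c) * u a b (c + 1) k
      = k * u a b c k - (k + 1) * u a b c (k + 1) := by
  rw [u_cSucc a b hc0, u_succ a b hc0]
  have hck : c + (k:ℝ) ≠ 0 := by positivity
  have hk1 : (1:ℝ) + k ≠ 0 := by positivity
  have hc' : c ≠ 0 := hc0.ne'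
  field_simp
  ring

/-- Polynomial-decay bound on the hypergeometric term. -/
lemma u_le {a b c : ℝ} (ha0 : 0 < a) (ha1 : a < 1) (hb0 : 0 < b) (hbc : b < c)
    (hc1 : 1 ≤ c) (k : ℕ) :
    u a b c k ≤ c ^ (c - b) * ((k : ℝ) + 1) ^ (a - 1 + (b - c)) := by
  have hc0 : (0:ℝ) < c := by linarith
  have hk1 : (0:ℝ) < (k:ℝ) + 1 := by positivity
  have hfac : (0:ℝ) < (Nat.factorial k : ℝ) := by positivity
  have h1 : asc a k ≤ (Nat.factorial k : ℝ) * ((k:ℝ) + 1) ^ (a - 1) := by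
    have h := asc_ratio_le ha0 ha1 k
    rw [asc_one] at h
    have h2 : ((1:ℝ) / (1 + (k:ℝ))) ^ ((1:ℝ) - a) = ((k:ℝ) + 1) ^ (a - 1) := by
      rw [one_div, Real.inv_rpow (by positivity), ← Real.rpow_neg (by positivity),
        show (1:ℝ) + (k:ℝ) = (k:ℝ) + 1 by ring, show -((1:ℝ) - a) = a - 1 by ring]
    rw [h2] at h
    exact h
  have hbnd : asc b k ≤ asc c k * (c ^ (c - b) * ((k:ℝ) + 1) ^ (b - c)) := by
    have h := asc_ratio_le hb0 hbc k
    have e1 : (c / (c + (k:ℝ))) ^ (c - b) = c ^ (c - b) * (c + (k:ℝ)) ^ (b - c) := by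
      rw [Real.div_rpow hc0.le (by positivity), div_eq_mul_inv,
        ← Real.rpow_neg (by positivity), neg_sub]
    have e2 : (c + (k:ℝ)) ^ (b - c) ≤ ((k:ℝ) + 1) ^ (b - c) :=
      Real.rpow_le_rpow_of_nonpos (by positivity) (by linarith) (by linarith)
    calc asc b k ≤ asc c k * (c / (c + (k:ℝ))) ^ (c - b) := h
      _ = asc c k * (c ^ (c - b) * (c + (k:ℝ)) ^ (b - c)) := by rw [e1]
      _ ≤ asc c k * (c ^ (c - b) * ((k:ℝ) + 1) ^ (b - c)) := by
          have hcb : (0:ℝ) < c ^ (c - b) := Real.rpow_pos_of_pos hc0 _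
          exact mul_le_mul_of_nonneg_left
            (mul_le_mul_of_nonneg_left e2 hcb.le) (asc_nonneg hc0 k)
  rw [u, div_le_iff₀ (mul_pos (asc_pos hc0 k) hfac)]
  calc asc a k * asc b k
      ≤ ((Nat.factorial k : ℝ) * ((k:ℝ)+1) ^ (a-1)) *
          (asc c k * (c ^ (c - b) * ((k:ℝ) + 1) ^ (b - c))) := by
        apply mul_le_mul h1 hbnd (asc_nonneg hb0 k) (by positivity)
    _ = c ^ (c - b) * ((k:ℝ) + 1) ^ (a - 1 + (b - c)) * (asc c k * (Nat.factorial k : ℝ)) := by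
        rw [Real.rpow_add hk1]; ring

end Autocov

namespace Autocov

lemma summable_rpow_aux {E : ℝ} (hE : E < -1) :
    Summable (fun k : ℕ => ((k : ℝ) + 1) ^ E) := by
  have h : Summable (fun n : ℕ => ((n : ℝ)) ^ E) := Real.summable_nat_rpow.2 hE
  have := (summable_nat_add_iff 1).2 h
  refine this.congr fun k => ?_
  push_cast
  ring_nf

lemma summable_u {a b c : ℝ} (ha0 : 0 < a) (ha1 : a < 1) (hb0 : 0 < b) (hbc : b < c)
    (hc1 : 1 ≤ c) (hab : a + b < c) : Summable (u a b c) := by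
  have hc0 : (0:ℝ) < c := by linarith
  refine Summable.of_nonneg_of_le (fun k => (u_pos ha0 hb0 hc0 k).le)
    (fun k => u_le ha0 ha1 hb0 hbc hc1 k) ?_
  exact (summable_rpow_aux (by linarith)).mul_left _

lemma u_anti {a b c c' : ℝ} (ha0 : 0 < a) (hb0 : 0 < b) (hc0 : 0 < c) (hcc : c ≤ c') (k : ℕ) :
    u a b c' k ≤ u a b c k := by
  have hnum : (0:ℝ) ≤ asc a k * asc b k := mul_nonneg (asc_nonneg ha0 k) (asc_nonneg hb0 k)
  have h1 : (0:ℝ) < asc c k * (Nat.factorial k : ℝ) := by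
    have := asc_pos hc0 k; positivity
  exact div_le_div_of_nonneg_left hnum h1
    (mul_le_mul_of_nonneg_right (asc_mono hc0 hcc k) (Nat.cast_nonneg _))

/-- `F` is the hypergeometric sum `₂F₁(a,b;c;1)`. -/
noncomputable def F (a b c : ℝ) : ℝ := ∑' k, u a b c k

/-- The contiguous recurrence `F(c) = ((c-a)(c-b)/(c(c-a-b))) F(c+1)`. -/
lemma F_rec {a b c : ℝ} (ha0 : 0 < a) (ha1 : a < 1) (hb0 : 0 < b) (hbc : b < c)
    (hc1 : 1 ≤ c) (hab : a + b < c) :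
    F a b c = ((c - a) * (c - b) / (c * (c - a - b))) * F a b (c + 1) := by
  have hc0 : (0:ℝ) < c := by linarith
  have Sc : Summable (u a b c) := summable_u ha0 ha1 hb0 hbc hc1 hab
  have Sc1 : Summable (u a b (c+1)) :=
    summable_u ha0 ha1 hb0 (by linarith) (by linarith) (by linarith)
  set g : ℕ → ℝ := fun k => k * u a b c k with hg
  have hgle : ∀ k : ℕ, g k ≤ c ^ (c - b) * ((k:ℝ) + 1) ^ (a - 1 + (b - c) + 1) := by
    intro k
    have h1 := u_le ha0 ha1 hb0 hbc hc1 k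
    have hk1 : (0:ℝ) < (k:ℝ) + 1 := by positivity
    have h2 : ((k:ℝ)+1) ^ (a - 1 + (b - c) + 1) = ((k:ℝ)+1) ^ (a-1+(b-c)) * ((k:ℝ)+1) := by
      rw [Real.rpow_add hk1, Real.rpow_one]
    rw [h2]
    have hC : (0:ℝ) ≤ c ^ (c - b) := (Real.rpow_pos_of_pos hc0 _).le
    have h3 : (k:ℝ) * u a b c k ≤ (k:ℝ) * (c ^ (c-b) * ((k:ℝ)+1) ^ (a-1+(b-c))) := by
      apply mul_le_mul_of_nonneg_left h1 (Nat.cast_nonneg k)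
    have h4 : (k:ℝ) * (c ^ (c-b) * ((k:ℝ)+1) ^ (a-1+(b-c)))
        ≤ c ^ (c-b) * (((k:ℝ)+1) ^ (a-1+(b-c)) * ((k:ℝ)+1)) := by
      have h5 : (0:ℝ) ≤ ((k:ℝ)+1) ^ (a-1+(b-c)) := (Real.rpow_pos_of_pos hk1 _).le
      nlinarith [Nat.cast_nonneg (α := ℝ) k]
    calc g k = (k:ℝ) * u a b c k := rfl
      _ ≤ _ := h3
      _ ≤ _ := h4
      _ = _ := by ring
  have hg0 : Filter.Tendsto g Filter.atTop (nhds 0) := by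
    have hlim : Filter.Tendsto (fun k : ℕ => c ^ (c - b) * ((k:ℝ) + 1) ^ (a - 1 + (b - c) + 1))
        Filter.atTop (nhds 0) := by
      have hcomp : Filter.Tendsto (fun k : ℕ => ((k:ℝ) + 1)) Filter.atTop Filter.atTop :=
        Filter.tendsto_atTop_add_const_right _ 1 tendsto_natCast_atTop_atTop
      have hpow : Filter.Tendsto (fun x : ℝ => x ^ (a - 1 + (b - c) + 1))
          Filter.atTop (nhds 0) := by
        have := tendsto_rpow_neg_atTop (y := -(a - 1 + (b - c) + 1)) (by linarith)
        simpa using this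
      have := (hpow.comp hcomp).const_mul (c ^ (c - b))
      simpa using this
    refine squeeze_zero (fun k => ?_) hgle hlim
    exact mul_nonneg (Nat.cast_nonneg k) (u_pos ha0 hb0 hc0 k).le
  set D : ℕ → ℝ := fun k =>
    (c - a - b) * u a b c k - ((c - a) * (c - b) / c) * u a b (c + 1) k with hD
  have hDsum : Summable D := (Sc.mul_left _).sub (Sc1.mul_left _)
  have hDtel : ∀ k, D k = g k - g (k + 1) := by
    intro k
    have := u_telescope a b hc0 k
    simp only [hD, hg]
    push_cast
    linarith [this]
  have hDhas : HasSum D 0 := by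
    rw [hasSum_iff_tendsto_nat_of_summable_norm (by
      simpa using summable_abs_iff.mpr hDsum)]
    have hps : ∀ n, ∑ i ∈ Finset.range n, D i = g 0 - g n := by
      intro n
      rw [Finset.sum_congr rfl fun i _ => hDtel i]
      exact Finset.sum_range_sub' g n
    simp only [hps]
    have : g 0 = 0 := by simp [hg]
    rw [this]
    simpa using hg0.neg
  have h0 : (c - a - b) * F a b c - ((c - a) * (c - b) / c) * F a b (c + 1) = 0 := by
    have := hDhas.tsum_eq
    rw [hD] at this
    rw [F, F, ← tsum_mul_left, ← tsum_mul_left, ← Summable.tsum_sub (Sc.mul_left _) (Sc1.mul_left _)]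
    exact this
  have hcab : c - a - b ≠ 0 := by linarith
  field_simp at h0 ⊢
  linarith [h0]

end Autocov

namespace Autocov

lemma one_le_F {a b c : ℝ} (ha0 : 0 < a) (ha1 : a < 1) (hb0 : 0 < b) (hbc : b < c)
    (hc1 : 1 ≤ c) (hab : a + b < c) : 1 ≤ F a b c := by
  have hc0 : (0:ℝ) < c := by linarith
  have Sc := summable_u ha0 ha1 hb0 hbc hc1 hab
  have h := Summable.le_tsum Sc 0 (fun j _ => (u_pos ha0 hb0 hc0 j).le)
  rw [u_zero] at h
  exact h

lemma F_le {a b c₀ c : ℝ} (ha0 : 0 < a) (ha1 : a < 1) (hb0 : 0 < b) (hbc : b < c₀)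
    (hc1 : 1 ≤ c₀) (hab : a + b < c₀) (hcc : c₀ ≤ c) :
    F a b c ≤ 1 + (c₀ / c) * ∑' k, u a b c₀ (k + 1) := by
  have hc00 : (0:ℝ) < c₀ := by linarith
  have hc0 : (0:ℝ) < c := by linarith
  have Sc : Summable (u a b c) :=
    summable_u ha0 ha1 hb0 (by linarith) (by linarith) (by linarith)
  have Sc0 : Summable (u a b c₀) := summable_u ha0 ha1 hb0 hbc hc1 hab
  have Sc' : Summable (fun k => u a b c (k + 1)) := (summable_nat_add_iff 1).2 Sc
  have Sc0' : Summable (fun k => u a b c₀ (k + 1)) := (summable_nat_add_iff 1).2 Sc0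
  have key : ∀ k : ℕ, u a b c (k + 1) ≤ (c₀ / c) * u a b c₀ (k + 1) := by
    intro k
    have hnum : (0:ℝ) ≤ asc a (k+1) * asc b (k+1) :=
      mul_nonneg (asc_nonneg ha0 _) (asc_nonneg hb0 _)
    have e1 : u a b c (k+1) =
        asc a (k+1) * asc b (k+1) / (c * (asc (c+1) k * (Nat.factorial (k+1) : ℝ))) := by
      rw [u, show asc c (k+1) = c * asc (c+1) k from asc_succ' c k]; ring
    have e2 : (c₀ / c) * u a b c₀ (k+1) =
        asc a (k+1) * asc b (k+1) / (c * (asc (c₀+1) k * (Nat.factorial (k+1) : ℝ))) := by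
      rw [u, show asc c₀ (k+1) = c₀ * asc (c₀+1) k from asc_succ' c₀ k]
      have h1 : asc (c₀+1) k ≠ 0 := (asc_pos (by linarith) k).ne'
      have h2 : (Nat.factorial (k+1) : ℝ) ≠ 0 := by positivity
      field_simp
    rw [e1, e2]
    apply div_le_div_of_nonneg_left hnum
    · have := asc_pos (show (0:ℝ) < c₀ + 1 by linarith) k
      positivity
    · have h3 : asc (c₀+1) k ≤ asc (c+1) k := asc_mono (by linarith) (by linarith) k
      have h4 : (0:ℝ) ≤ (Nat.factorial (k+1) : ℝ) := by positivity
      exact mul_le_mul_of_nonneg_left (mul_le_mul_of_nonneg_right h3 h4) hc0.le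
  have h1 : F a b c = 1 + ∑' k, u a b c (k + 1) := by
    rw [F, Summable.tsum_eq_zero_add Sc, u_zero]
  rw [h1]
  have h2 : ∑' k, u a b c (k+1) ≤ ∑' k, (c₀ / c) * u a b c₀ (k+1) :=
    Summable.tsum_le_tsum key Sc' (Sc0'.mul_left _)
  rw [tsum_mul_left] at h2
  linarith

lemma F_tendsto_one {a b c₀ : ℝ} (ha0 : 0 < a) (ha1 : a < 1) (hb0 : 0 < b) (hbc : b < c₀)
    (hc1 : 1 ≤ c₀) (hab : a + b < c₀) :
    Filter.Tendsto (fun n : ℕ => F a b (c₀ + n)) Filter.atTop (nhds 1) := by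
  have hc00 : (0:ℝ) < c₀ := by linarith
  set T := ∑' k, u a b c₀ (k + 1) with hT
  have hup : ∀ n : ℕ, F a b (c₀ + n) ≤ 1 + (c₀ / (c₀ + n)) * T := by
    intro n
    exact F_le ha0 ha1 hb0 hbc hc1 hab (by linarith [Nat.cast_nonneg (α := ℝ) n])
  have hlo : ∀ n : ℕ, 1 ≤ F a b (c₀ + n) := fun n =>
    one_le_F ha0 ha1 hb0 (by linarith [Nat.cast_nonneg (α := ℝ) n])
      (by linarith [Nat.cast_nonneg (α := ℝ) n]) (by linarith [Nat.cast_nonneg (α := ℝ) n])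
  have hlim : Filter.Tendsto (fun n : ℕ => 1 + (c₀ / (c₀ + n)) * T) Filter.atTop (nhds 1) := by
    have hd : Filter.Tendsto (fun n : ℕ => ((c₀ + n) : ℝ)) Filter.atTop Filter.atTop :=
      Filter.tendsto_atTop_add_const_left _ c₀ tendsto_natCast_atTop_atTop
    have h0 : Filter.Tendsto (fun n : ℕ => c₀ / (c₀ + n)) Filter.atTop (nhds 0) :=
      Filter.Tendsto.div_atTop tendsto_const_nhds hd
    have := (h0.mul_const T).const_add 1
    simpa using this
  exact tendsto_of_tendsto_of_tendsto_of_le_of_le tendsto_const_nhds hlim hlo hup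

end Autocov

namespace Autocov

lemma R_tendsto {a b c₀ : ℝ} (hca : 0 < c₀ - a) (hcb : 0 < c₀ - b) (hc : 0 < c₀)
    (hcab : 0 < c₀ - a - b) :
    Filter.Tendsto (fun n : ℕ =>
        asc (c₀ - a) (n+1) * asc (c₀ - b) (n+1) / (asc c₀ (n+1) * asc (c₀ - a - b) (n+1)))
      Filter.atTop
      (nhds (Real.Gamma c₀ * Real.Gamma (c₀ - a - b) /
        (Real.Gamma (c₀ - a) * Real.Gamma (c₀ - b)))) := by
  have hne : Real.Gamma (c₀ - a) * Real.Gamma (c₀ - b) ≠ 0 :=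
    (mul_pos (Real.Gamma_pos_of_pos hca) (Real.Gamma_pos_of_pos hcb)).ne'
  have hGs : Filter.Tendsto (fun n : ℕ =>
      Real.GammaSeq c₀ n * Real.GammaSeq (c₀ - a - b) n /
        (Real.GammaSeq (c₀ - a) n * Real.GammaSeq (c₀ - b) n)) Filter.atTop
      (nhds (Real.Gamma c₀ * Real.Gamma (c₀ - a - b) /
        (Real.Gamma (c₀ - a) * Real.Gamma (c₀ - b)))) :=
    ((Real.GammaSeq_tendsto_Gamma c₀).mul (Real.GammaSeq_tendsto_Gamma _)).div
      ((Real.GammaSeq_tendsto_Gamma _).mul (Real.GammaSeq_tendsto_Gamma _)) hne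
  refine hGs.congr' ?_
  filter_upwards [Filter.eventually_ge_atTop 1] with n hn
  have hn0 : (0:ℝ) < (n:ℝ) := by exact_mod_cast hn
  have hGdef : ∀ s : ℝ, Real.GammaSeq s n = (n:ℝ) ^ s * (Nat.factorial n : ℝ) / asc s (n+1) :=
    fun s => rfl
  have key : ∀ s t : ℝ, Real.GammaSeq s n * Real.GammaSeq t n
      = (n:ℝ) ^ (s + t) * ((Nat.factorial n : ℝ))^2 / (asc s (n+1) * asc t (n+1)) := by
    intro s t
    rw [hGdef, hGdef, div_mul_div_comm, Real.rpow_add hn0]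
    ring_nf
  have hexp : c₀ + (c₀ - a - b) = (c₀ - a) + (c₀ - b) := by ring
  rw [key, key, hexp]
  have A1 : asc c₀ (n+1) ≠ 0 := (asc_pos hc _).ne'
  have A2 : asc (c₀ - a - b) (n+1) ≠ 0 := (asc_pos hcab _).ne'
  have A3 : asc (c₀ - a) (n+1) ≠ 0 := (asc_pos hca _).ne'
  have A4 : asc (c₀ - b) (n+1) ≠ 0 := (asc_pos hcb _).ne'
  have P1 : (n:ℝ) ^ ((c₀ - a) + (c₀ - b)) ≠ 0 := (Real.rpow_pos_of_pos hn0 _).ne'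
  have P2 : ((Nat.factorial n : ℝ))^2 ≠ 0 := by positivity
  field_simp

end Autocov

open Autocov Filter Topology

/-- Closed form of the autocovariance series: For `0 < d₁, d₂ < 1/2`
and a natural lag `h`, with `ψ_j(d) = Γ(j+d)/(Γ(j+1)·Γ(d))`, the series
`∑_{j=0}^∞ ψ_j(d₁)·ψ_{j+h}(d₂)` converges to
`Γ(1-d₁-d₂)·Γ(d₂+h)/(Γ(d₂)·Γ(1-d₂)·Γ(1+h-d₁))`. -/
theorem autocovariance_closed_form (d₁ d₂ : ℝ)
    (hd₁0 : 0 < d₁) (hd₁ : d₁ < 1/2) (hd₂0 : 0 < d₂) (hd₂ : d₂ < 1/2) (h : ℕ) :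
    HasSum
      (fun j : ℕ =>
        (Real.Gamma (j + d₁) / (Real.Gamma (j + 1) * Real.Gamma d₁)) *
          (Real.Gamma ((j + h : ℕ) + d₂) / (Real.Gamma ((j + h : ℕ) + 1) * Real.Gamma d₂)))
      (Real.Gamma (1 - d₁ - d₂) * Real.Gamma (d₂ + h) /
        (Real.Gamma d₂ * Real.Gamma (1 - d₂) * Real.Gamma (1 + h - d₁))) := by
  have hh : (0:ℝ) ≤ (h:ℝ) := Nat.cast_nonneg h
  have ha0 : 0 < d₁ := hd₁0
  have ha1 : d₁ < 1 := by linarith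
  have hb0 : 0 < (h:ℝ) + d₂ := by linarith
  have hbc : (h:ℝ) + d₂ < (h:ℝ) + 1 := by linarith
  have hc1 : 1 ≤ (h:ℝ) + 1 := by linarith
  have hab : d₁ + ((h:ℝ) + d₂) < (h:ℝ) + 1 := by linarith
  have hc0 : (0:ℝ) < (h:ℝ) + 1 := by linarith
  -- chain of contiguous relations
  have chain : ∀ n : ℕ, F d₁ ((h:ℝ) + d₂) ((h:ℝ) + 1) =
      (∏ m ∈ Finset.range n,
        (((h:ℝ) + 1 + m - d₁) * ((h:ℝ) + 1 + m - ((h:ℝ) + d₂)) /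
          (((h:ℝ) + 1 + m) * ((h:ℝ) + 1 + m - d₁ - ((h:ℝ) + d₂))))) *
        F d₁ ((h:ℝ) + d₂) ((h:ℝ) + 1 + n) := by
    intro n
    induction n with
    | zero => simp
    | succ n ih =>
      have hn0 : (0:ℝ) ≤ (n:ℝ) := Nat.cast_nonneg n
      have hrec := F_rec (a := d₁) (b := (h:ℝ) + d₂) (c := (h:ℝ) + 1 + n)
        ha0 ha1 hb0 (by linarith) (by linarith) (by linarith)
      rw [Finset.prod_range_succ, ih, hrec]
      have hcast : (h:ℝ) + 1 + (n:ℝ) + 1 = (h:ℝ) + 1 + ((n+1 : ℕ):ℝ) := by push_cast; ring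
      rw [hcast]
      ring
  have hprod : ∀ n : ℕ,
      (∏ m ∈ Finset.range n,
        (((h:ℝ) + 1 + m - d₁) * ((h:ℝ) + 1 + m - ((h:ℝ) + d₂)) /
          (((h:ℝ) + 1 + m) * ((h:ℝ) + 1 + m - d₁ - ((h:ℝ) + d₂)))))
      = asc ((h:ℝ) + 1 - d₁) n * asc ((h:ℝ) + 1 - ((h:ℝ) + d₂)) n /
          (asc ((h:ℝ) + 1) n * asc ((h:ℝ) + 1 - d₁ - ((h:ℝ) + d₂)) n) := by
    intro n
    rw [asc, asc, asc, asc, ← Finset.prod_mul_distrib, ← Finset.prod_mul_distrib,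
      ← Finset.prod_div_distrib]
    exact Finset.prod_congr rfl fun m _ => by ring
  have hca : (0:ℝ) < (h:ℝ) + 1 - d₁ := by linarith
  have hcb : (0:ℝ) < (h:ℝ) + 1 - ((h:ℝ) + d₂) := by linarith
  have hcab : (0:ℝ) < (h:ℝ) + 1 - d₁ - ((h:ℝ) + d₂) := by linarith
  have hRlim := R_tendsto (a := d₁) (b := (h:ℝ) + d₂) hca hcb hc0 hcab
  have hFlim : Filter.Tendsto (fun n : ℕ => F d₁ ((h:ℝ) + d₂) ((h:ℝ) + 1 + ((n+1:ℕ):ℝ)))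
      Filter.atTop (nhds 1) := by
    have h2 := (F_tendsto_one ha0 ha1 hb0 hbc hc1 hab).comp (tendsto_add_atTop_nat 1)
    exact h2.congr fun n => rfl
  have hseq : ∀ n : ℕ, F d₁ ((h:ℝ) + d₂) ((h:ℝ) + 1) =
      (asc ((h:ℝ) + 1 - d₁) (n+1) * asc ((h:ℝ) + 1 - ((h:ℝ) + d₂)) (n+1) /
        (asc ((h:ℝ) + 1) (n+1) * asc ((h:ℝ) + 1 - d₁ - ((h:ℝ) + d₂)) (n+1))) *
        F d₁ ((h:ℝ) + d₂) ((h:ℝ) + 1 + ((n+1:ℕ):ℝ)) := by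
    intro n
    rw [chain (n+1), hprod (n+1)]
  have hFval : F d₁ ((h:ℝ) + d₂) ((h:ℝ) + 1) =
      Real.Gamma ((h:ℝ) + 1) * Real.Gamma ((h:ℝ) + 1 - d₁ - ((h:ℝ) + d₂)) /
        (Real.Gamma ((h:ℝ) + 1 - d₁) * Real.Gamma ((h:ℝ) + 1 - ((h:ℝ) + d₂))) * 1 := by
    have hconst : Filter.Tendsto (fun _ : ℕ => F d₁ ((h:ℝ) + d₂) ((h:ℝ) + 1)) Filter.atTop
        (nhds (F d₁ ((h:ℝ) + d₂) ((h:ℝ) + 1))) := tendsto_const_nhds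
    exact tendsto_nhds_unique (hconst.congr fun n => hseq n) (hRlim.mul hFlim)
  rw [mul_one] at hFval
  -- term identification
  have Sc0 : Summable (u d₁ ((h:ℝ) + d₂) ((h:ℝ) + 1)) := summable_u ha0 ha1 hb0 hbc hc1 hab
  have hΓd₁ : Real.Gamma d₁ ≠ 0 := (Real.Gamma_pos_of_pos hd₁0).ne'
  have hΓd₂ : Real.Gamma d₂ ≠ 0 := (Real.Gamma_pos_of_pos hd₂0).ne'
  have hterm : ∀ j : ℕ,
      (Real.Gamma (j + d₁) / (Real.Gamma (j + 1) * Real.Gamma d₁)) *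
        (Real.Gamma ((j + h : ℕ) + d₂) / (Real.Gamma ((j + h : ℕ) + 1) * Real.Gamma d₂))
      = (Real.Gamma ((h:ℝ) + d₂) / ((Nat.factorial h : ℝ) * Real.Gamma d₂)) *
          u d₁ ((h:ℝ) + d₂) ((h:ℝ) + 1) j := by
    intro j
    have e1 : Real.Gamma ((j:ℝ) + d₁) = asc d₁ j * Real.Gamma d₁ := Gamma_asc hd₁0 j
    have e2 : Real.Gamma ((j:ℝ) + 1) = (Nat.factorial j : ℝ) := Real.Gamma_nat_eq_factorial j
    have e3 : ((j + h : ℕ) : ℝ) + d₂ = (j:ℝ) + ((h:ℝ) + d₂) := by push_cast; ring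
    have e4 : ((j + h : ℕ) : ℝ) + 1 = (j:ℝ) + ((h:ℝ) + 1) := by push_cast; ring
    have e5 : Real.Gamma ((j:ℝ) + ((h:ℝ) + d₂))
        = asc ((h:ℝ) + d₂) j * Real.Gamma ((h:ℝ) + d₂) := Gamma_asc hb0 j
    have e6 : Real.Gamma ((j:ℝ) + ((h:ℝ) + 1))
        = asc ((h:ℝ) + 1) j * Real.Gamma ((h:ℝ) + 1) := Gamma_asc hc0 j
    have e7 : Real.Gamma ((h:ℝ) + 1) = (Nat.factorial h : ℝ) := Real.Gamma_nat_eq_factorial h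
    rw [e1, e2, e3, e4, e5, e6, e7, u]
    have n1 : asc ((h:ℝ) + 1) j ≠ 0 := (asc_pos hc0 j).ne'
    have n2 : (Nat.factorial j : ℝ) ≠ 0 := by positivity
    have n3 : (Nat.factorial h : ℝ) ≠ 0 := by positivity
    field_simp
  have hval : (Real.Gamma ((h:ℝ) + d₂) / ((Nat.factorial h : ℝ) * Real.Gamma d₂)) *
      (Real.Gamma ((h:ℝ) + 1) * Real.Gamma ((h:ℝ) + 1 - d₁ - ((h:ℝ) + d₂)) /
        (Real.Gamma ((h:ℝ) + 1 - d₁) * Real.Gamma ((h:ℝ) + 1 - ((h:ℝ) + d₂))))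
      = Real.Gamma (1 - d₁ - d₂) * Real.Gamma (d₂ + h) /
        (Real.Gamma d₂ * Real.Gamma (1 - d₂) * Real.Gamma (1 + h - d₁)) := by
    rw [show (h:ℝ) + 1 - d₁ - ((h:ℝ) + d₂) = 1 - d₁ - d₂ by ring,
      show (h:ℝ) + 1 - ((h:ℝ) + d₂) = 1 - d₂ by ring,
      show (h:ℝ) + 1 - d₁ = 1 + (h:ℝ) - d₁ by ring,
      show (h:ℝ) + d₂ = d₂ + (h:ℝ) by ring,
      Real.Gamma_nat_eq_factorial h]
    have n3 : (Nat.factorial h : ℝ) ≠ 0 := by positivity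
    have n4 : Real.Gamma (1 - d₂) ≠ 0 := (Real.Gamma_pos_of_pos (by linarith)).ne'
    have n5 : Real.Gamma (1 + (h:ℝ) - d₁) ≠ 0 := (Real.Gamma_pos_of_pos (by linarith)).ne'
    field_simp
  have H := Sc0.hasSum.mul_left
    (Real.Gamma ((h:ℝ) + d₂) / ((Nat.factorial h : ℝ) * Real.Gamma d₂))
  rw [show F d₁ ((h:ℝ) + d₂) ((h:ℝ) + 1)
      = ∑' k, u d₁ ((h:ℝ) + d₂) ((h:ℝ) + 1) k from rfl] at hFval
  rw [hFval] at H
  have hfun : (fun j : ℕ =>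
      (Real.Gamma (j + d₁) / (Real.Gamma (j + 1) * Real.Gamma d₁)) *
        (Real.Gamma ((j + h : ℕ) + d₂) / (Real.Gamma ((j + h : ℕ) + 1) * Real.Gamma d₂)))
      = fun j : ℕ => (Real.Gamma ((h:ℝ) + d₂) / ((Nat.factorial h : ℝ) * Real.Gamma d₂)) *
          u d₁ ((h:ℝ) + d₂) ((h:ℝ) + 1) j := funext hterm
  rw [hfun, ← hval]
  exact H
end

section
/- (Variance / lag-0 covariance identity) Let d₁, d₂ be real numbers with 0 < d₁ < 1/2 and 0 < d₂ < 1/2, and set ψ_j(d) = Γ(j+d)/(Γ(j+1)·Γ(d)). Then ∑_{j=0}^∞ ψ_j(d₁)·ψ_j(d₂) = Γ(1-d₁-d₂) / (Γ(1-d₁)·Γ(1-d₂)). In particular, with d₁ = d₂ = d, the variance of the fractionally differenced process is ∑_{j=0}^∞ ψ_j(d)² = Γ(1-2d) / (Γ(1-d))². -/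
open Real MeasureTheory intervalIntegral Filter

lemma ofReal_beta_integrand {a b x : ℝ} (hx : x ∈ Set.Ioo (0:ℝ) 1) :
    ((x ^ (a-1) * (1-x) ^ (b-1) : ℝ) : ℂ) = (x:ℂ) ^ ((a:ℂ)-1) * (1-(x:ℂ)) ^ ((b:ℂ)-1) := by
  have hx0 : (0:ℝ) ≤ x := hx.1.le
  have hx1 : (0:ℝ) ≤ 1 - x := by linarith [hx.2]
  have e1 : ((x ^ (a-1) : ℝ) : ℂ) = (x:ℂ) ^ ((a:ℂ)-1) := by
    rw [Complex.ofReal_cpow hx0]; push_cast; rfl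
  have e2 : (((1-x) ^ (b-1) : ℝ) : ℂ) = (1-(x:ℂ)) ^ ((b:ℂ)-1) := by
    rw [Complex.ofReal_cpow hx1]; push_cast; rfl
  rw [Complex.ofReal_mul, e1, e2]

lemma betaCplx_eq {a b : ℝ} (ha : 0 < a) (hb : 0 < b) :
    Complex.betaIntegral a b = ((Real.Gamma a * Real.Gamma b / Real.Gamma (a+b) : ℝ) : ℂ) := by
  have h := Complex.Gamma_mul_Gamma_eq_betaIntegral (s := (a:ℂ)) (t := (b:ℂ))
    (by simpa using ha) (by simpa using hb)
  have hG : Complex.Gamma ((a:ℂ)+(b:ℂ)) = ((Real.Gamma (a+b) : ℝ) : ℂ) := by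
    rw [← Complex.ofReal_add, Complex.Gamma_ofReal]
  have hne : ((Real.Gamma (a+b) : ℝ) : ℂ) ≠ 0 := by
    exact_mod_cast (Real.Gamma_pos_of_pos (by linarith)).ne'
  rw [Complex.Gamma_ofReal, Complex.Gamma_ofReal, hG] at h
  rw [Complex.ofReal_div, Complex.ofReal_mul, eq_div_iff hne, mul_comm, h]

lemma betaIntegrableOn_s9 {a b : ℝ} (ha : 0 < a) (hb : 0 < b) :
    IntegrableOn (fun t : ℝ => t ^ (a-1) * (1-t) ^ (b-1)) (Set.Ioo 0 1) volume := by
  have h1 : IntervalIntegrable (fun x : ℝ => (x:ℂ) ^ ((a:ℂ)-1) * (1-(x:ℂ)) ^ ((b:ℂ)-1))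
      volume 0 1 := Complex.betaIntegral_convergent (by simpa using ha) (by simpa using hb)
  have h2 : IntegrableOn (fun x : ℝ => (x:ℂ) ^ ((a:ℂ)-1) * (1-(x:ℂ)) ^ ((b:ℂ)-1))
      (Set.Ioo 0 1) volume :=
    ((intervalIntegrable_iff_integrableOn_Ioc_of_le zero_le_one).mp h1).mono_set
      Set.Ioo_subset_Ioc_self
  refine h2.re.congr ?_
  filter_upwards [ae_restrict_mem measurableSet_Ioo] with x hx
  rw [← ofReal_beta_integrand hx]
  simp

lemma betaEval {a b : ℝ} (ha : 0 < a) (hb : 0 < b) :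
    ∫ t in Set.Ioo (0:ℝ) 1, t ^ (a-1) * (1-t) ^ (b-1)
      = Real.Gamma a * Real.Gamma b / Real.Gamma (a+b) := by
  have key : Complex.betaIntegral a b
      = ((∫ t in Set.Ioo (0:ℝ) 1, t ^ (a-1) * (1-t) ^ (b-1) : ℝ) : ℂ) := by
    rw [Complex.betaIntegral, intervalIntegral.integral_of_le zero_le_one,
      MeasureTheory.integral_Ioc_eq_integral_Ioo]
    refine Eq.trans (setIntegral_congr_fun measurableSet_Ioo
      (fun x hx => (ofReal_beta_integrand hx).symm)) ?_
    exact _root_.integral_ofReal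
  rw [betaCplx_eq ha hb] at key
  exact_mod_cast key.symm


open Real Filter

noncomputable def psifd (d : ℝ) (j : ℕ) : ℝ :=
  Real.Gamma (j + d) / (Real.Gamma (j + 1) * Real.Gamma d)

lemma psifd_pos {d : ℝ} (hd : 0 < d) (j : ℕ) : 0 < psifd d j := by
  unfold psifd
  have h1 : 0 < Real.Gamma (j + d) := Real.Gamma_pos_of_pos (by positivity)
  have h2 : 0 < Real.Gamma (j + 1) := Real.Gamma_pos_of_pos (by positivity)
  have h3 : 0 < Real.Gamma d := Real.Gamma_pos_of_pos hd
  positivity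

lemma psifd_zero {d : ℝ} (hd : 0 < d) : psifd d 0 = 1 := by
  unfold psifd
  simp [Real.Gamma_one, div_self (Real.Gamma_pos_of_pos hd).ne']

lemma psifd_succ {d : ℝ} (hd : 0 < d) (j : ℕ) :
    psifd d (j+1) = ((j:ℝ) + d) / ((j:ℝ) + 1) * psifd d j := by
  unfold psifd
  have e1 : ((j:ℝ)+1) + d = (j + d) + 1 := by ring
  have e2 : ((j:ℝ)+1) + 1 = (j + 1) + 1 := by ring
  have g1 : Real.Gamma (((j:ℕ)+1 : ℕ) + d) = ((j:ℝ) + d) * Real.Gamma (j + d) := by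
    push_cast
    rw [e1, Real.Gamma_add_one (by positivity)]
  have g2 : Real.Gamma (((j:ℕ)+1 : ℕ) + 1) = ((j:ℝ) + 1) * Real.Gamma (j + 1) := by
    push_cast
    rw [e2, Real.Gamma_add_one (by positivity)]
  rw [g1, g2]
  have h2 : Real.Gamma ((j:ℝ) + 1) ≠ 0 := (Real.Gamma_pos_of_pos (by positivity)).ne'
  have hj1 : ((j:ℝ) + 1) ≠ 0 := by positivity
  field_simp

lemma tendsto_ratio {d : ℝ} :
    Tendsto (fun j : ℕ => ((j:ℝ) + d) / ((j:ℝ) + 1)) atTop (nhds 1) := by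
  have h : ∀ j : ℕ, ((j:ℝ) + d) / ((j:ℝ) + 1) = 1 + (d - 1) / ((j:ℝ) + 1) := by
    intro j
    have : ((j:ℝ) + 1) ≠ 0 := by positivity
    field_simp
    ring
  simp_rw [h]
  have h2 : Tendsto (fun j : ℕ => (d - 1) / ((j:ℝ) + 1)) atTop (nhds 0) := by
    apply Tendsto.div_atTop tendsto_const_nhds
    exact tendsto_atTop_add_const_right _ 1 tendsto_natCast_atTop_atTop
  simpa using tendsto_const_nhds.add h2

lemma summable_psifd_mul_pow {d : ℝ} (hd : 0 < d) {r : ℝ} (hr : |r| < 1) :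
    Summable (fun j : ℕ => psifd d j * r ^ j) := by
  rcases eq_or_ne r 0 with h0 | h0
  · subst h0
    apply summable_of_ne_finset_zero (s := {0})
    intro j hj
    have : j ≠ 0 := by simpa using hj
    simp [zero_pow this]
  · apply summable_of_ratio_test_tendsto_lt_one hr
    · filter_upwards with j
      exact mul_ne_zero (psifd_pos hd j).ne' (pow_ne_zero _ h0)
    · have key : ∀ j : ℕ, ‖psifd d (j+1) * r ^ (j+1)‖ / ‖psifd d j * r ^ j‖
          = ((j:ℝ) + d) / ((j:ℝ) + 1) * |r| := by
        intro j
        have hp := psifd_pos hd j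
        have hq : (0:ℝ) < ((j:ℝ) + d) / ((j:ℝ) + 1) := by positivity
        simp only [psifd_succ hd j, norm_mul, norm_pow, Real.norm_eq_abs, abs_mul]
        rw [abs_of_pos hq, abs_of_pos hp, pow_succ]
        have h1 : psifd d j ≠ 0 := hp.ne'
        have h2 : |r| ^ j ≠ 0 := pow_ne_zero _ (abs_ne_zero.mpr h0)
        field_simp
      simp_rw [key]
      simpa using tendsto_ratio.mul_const |r|

lemma summable_deriv_psifd {d : ℝ} (hd : 0 < d) {r : ℝ} (hr0 : 0 < r) (hr : r < 1) :
    Summable (fun j : ℕ => (j:ℝ) * psifd d j * r ^ (j-1)) := by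
  apply summable_of_ratio_test_tendsto_lt_one (l := r) hr
  · filter_upwards [eventually_ge_atTop 1] with j hj
    have hj' : (0:ℝ) < j := by exact_mod_cast hj
    exact mul_ne_zero (mul_ne_zero hj'.ne' (psifd_pos hd j).ne') (pow_ne_zero _ hr0.ne')
  · have key : ∀ᶠ j : ℕ in atTop,
        (fun j : ℕ => (1 + d / (j:ℝ)) * r) j =
        ‖((j+1 : ℕ):ℝ) * psifd d (j+1) * r ^ ((j+1)-1)‖ / ‖(j:ℝ) * psifd d j * r ^ (j-1)‖ := by
      filter_upwards [eventually_ge_atTop 1] with j hj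
      obtain ⟨k, rfl⟩ : ∃ k, j = k + 1 := ⟨j - 1, by omega⟩
      have hp1 := psifd_pos hd (k+1)
      have hp2 := psifd_pos hd (k+1+1)
      have hk1 : (0:ℝ) < (k:ℝ) + 1 := by positivity
      have hsub1 : (k+1) - 1 = k := by omega
      have hsub2 : (k+1+1) - 1 = k+1 := by omega
      rw [hsub1, hsub2, Real.norm_eq_abs, Real.norm_eq_abs,
        abs_of_pos (by positivity : (0:ℝ) < ((k+1+1 : ℕ):ℝ) * psifd d (k+1+1) * r ^ (k+1)),
        abs_of_pos (by positivity : (0:ℝ) < ((k+1 : ℕ):ℝ) * psifd d (k+1) * r ^ k),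
        psifd_succ hd (k+1), pow_succ]
      have hrk : r ^ k ≠ 0 := (pow_pos hr0 k).ne'
      push_cast
      field_simp
    have lim : Tendsto (fun j : ℕ => (1 + d / (j:ℝ)) * r) atTop (nhds r) := by
      have hd0 : Tendsto (fun j : ℕ => d / (j:ℝ)) atTop (nhds 0) :=
        Tendsto.div_atTop tendsto_const_nhds tendsto_natCast_atTop_atTop
      simpa using ((tendsto_const_nhds (x := (1:ℝ))).add hd0).mul_const r
    exact Filter.Tendsto.congr' key lim

lemma psifd_hasSum {d : ℝ} (hd : 0 < d) {t : ℝ} (ht0 : 0 ≤ t) (ht1 : t < 1) :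
    ∑' j : ℕ, psifd d j * t ^ j = (1 - t) ^ (-d) := by
  set r : ℝ := (t + 1) / 2 with hrdef
  have hr0 : 0 < r := by positivity
  have hr1 : r < 1 := by rw [hrdef]; linarith
  have htr : t < r := by rw [hrdef]; linarith
  set s : Set ℝ := Set.Ioo (-r) r with hsdef
  have h0s : (0:ℝ) ∈ s := ⟨by linarith, hr0⟩
  have hsum0 : Summable (fun j : ℕ => psifd d j * (0:ℝ) ^ j) :=
    summable_psifd_mul_pow hd (by norm_num)
  have hu : Summable (fun j : ℕ => (j:ℝ) * psifd d j * r ^ (j-1)) :=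
    summable_deriv_psifd hd hr0 hr1
  have hmem_abs : ∀ y ∈ s, |y| < r := fun y hy => abs_lt.2 ⟨hy.1, hy.2⟩
  have hderiv_term : ∀ (j : ℕ) (y : ℝ), y ∈ s →
      HasDerivAt (fun z : ℝ => psifd d j * z ^ j) ((j:ℝ) * psifd d j * y ^ (j-1)) y := by
    intro j y _
    have h := (hasDerivAt_pow j y).const_mul (psifd d j)
    rw [show (j:ℝ) * psifd d j * y ^ (j-1) = psifd d j * ((j:ℝ) * y ^ (j-1)) by ring]
    exact h
  have hbound : ∀ (j : ℕ) (y : ℝ), y ∈ s →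
      ‖(j:ℝ) * psifd d j * y ^ (j-1)‖ ≤ (j:ℝ) * psifd d j * r ^ (j-1) := by
    intro j y hy
    have hp := psifd_pos hd j
    have h1 : ‖(j:ℝ) * psifd d j * y ^ (j-1)‖ = (j:ℝ) * psifd d j * |y| ^ (j-1) := by
      rw [Real.norm_eq_abs, abs_mul, abs_mul, abs_pow, abs_of_nonneg (Nat.cast_nonneg j),
        abs_of_pos hp]
    rw [h1]
    have h2 : |y| ^ (j-1) ≤ r ^ (j-1) := pow_le_pow_left₀ (abs_nonneg y) (hmem_abs y hy).le _
    have h3 : (0:ℝ) ≤ (j:ℝ) * psifd d j := by positivity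
    exact mul_le_mul_of_nonneg_left h2 h3
  set f : ℝ → ℝ := fun y => ∑' j : ℕ, psifd d j * y ^ j with hfdef
  have hF : ∀ y ∈ s, HasDerivAt f (∑' j : ℕ, (j:ℝ) * psifd d j * y ^ (j-1)) y := by
    intro y hy
    exact hasDerivAt_tsum_of_isPreconnected hu isOpen_Ioo isPreconnected_Ioo
      hderiv_term hbound h0s hsum0 hy
  have hsummy : ∀ y ∈ s, Summable (fun j : ℕ => psifd d j * y ^ j) := by
    intro y hy
    exact summable_psifd_mul_pow hd ((hmem_abs y hy).trans hr1)
  have hsumA : ∀ y ∈ s, Summable (fun j : ℕ => (j:ℝ) * psifd d j * y ^ (j-1)) := by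
    intro y hy
    exact Summable.of_norm_bounded hu (fun j => hbound j y hy)
  -- the key ODE identity
  have key : ∀ y ∈ s, (1 - y) * (∑' j : ℕ, (j:ℝ) * psifd d j * y ^ (j-1)) = d * f y := by
    intro y hy
    set a : ℕ → ℝ := fun j => (j:ℝ) * psifd d j * y ^ (j-1) with hadef
    have hA : Summable a := hsumA y hy
    have step1 : ∑' j, a j = ∑' j, a (j+1) := by
      rw [Summable.tsum_eq_zero_add hA]
      simp [hadef]
    have step2 : ∀ j : ℕ, a (j+1) = ((j:ℝ) + d) * (psifd d j * y ^ j) := by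
      intro j
      have hsub : (j+1) - 1 = j := by omega
      simp only [hadef, hsub, psifd_succ hd j]
      have hj1 : ((j:ℝ) + 1) ≠ 0 := by positivity
      push_cast
      field_simp
    have hc : ∀ j : ℕ, a j * y = (j:ℝ) * (psifd d j * y ^ j) := by
      intro j
      rcases Nat.eq_zero_or_pos j with h | h
      · subst h; simp [hadef]
      · obtain ⟨k, rfl⟩ : ∃ k, j = k + 1 := ⟨j - 1, by omega⟩
        have hsub : (k+1) - 1 = k := by omega
        simp only [hadef, hsub]
        ring
    have hsplit : ∀ j : ℕ, a (j+1) = a j * y + d * (psifd d j * y ^ j) := by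
      intro j
      rw [step2, hc]
      ring
    have hsc : Summable (fun j => a j * y) := hA.mul_right y
    have hsd : Summable (fun j => d * (psifd d j * y ^ j)) := (hsummy y hy).mul_left d
    have step3 : ∑' j, a (j+1) = (∑' j, a j * y) + ∑' j, d * (psifd d j * y ^ j) := by
      rw [← Summable.tsum_add hsc hsd]
      exact tsum_congr hsplit
    have step4 : ∑' j, a j * y = (∑' j, a j) * y := tsum_mul_right
    have step5 : ∑' j, d * (psifd d j * y ^ j) = d * f y := by
      rw [hfdef]
      exact (hsummy y hy).tsum_mul_left d
    have heq : ∑' j, a j = (∑' j, a j) * y + d * f y := by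
      calc ∑' j, a j = ∑' j, a (j+1) := step1
        _ = ∑' j, a j * y + ∑' j, d * (psifd d j * y ^ j) := step3
        _ = (∑' j, a j) * y + d * f y := by rw [step4, step5]
    linear_combination heq
  -- g has zero derivative
  set g : ℝ → ℝ := fun y => (1 - y) ^ d * f y with hgdef
  have hg : ∀ y ∈ s, HasDerivAt g 0 y := by
    intro y hy
    have hy1 : 0 < 1 - y := by have := hy.2; simp only [hsdef, Set.mem_Ioo] at hy; linarith [hy.2, hr1]
    have h1 : HasDerivAt (fun z : ℝ => 1 - z) (-1) y := by
      simpa using (hasDerivAt_id y).const_sub 1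
    have h2 : HasDerivAt (fun x : ℝ => x ^ d) (d * (1-y) ^ (d-1)) (1-y) :=
      Real.hasDerivAt_rpow_const (Or.inl hy1.ne')
    have h3 : HasDerivAt (fun z : ℝ => (1 - z) ^ d) (d * (1-y) ^ (d-1) * (-1)) y :=
      h2.comp y h1
    have h4 := h3.mul (hF y hy)
    have hz : d * (1-y) ^ (d-1) * (-1) * f y
        + (1 - y) ^ d * (∑' j : ℕ, (j:ℝ) * psifd d j * y ^ (j-1)) = 0 := by
      have hrw : (1 - y) ^ d = (1-y) ^ (d-1) * (1-y) := by
        rw [← Real.rpow_add_one hy1.ne' (d-1)]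
        norm_num
      rw [hrw]
      linear_combination ((1 - y) ^ (d-1)) * key y hy
    rw [hz] at h4
    exact h4
  -- constancy on [0, t]
  have hts : Set.Icc (0:ℝ) t ⊆ s := by
    intro y hy
    exact ⟨by linarith [hy.1], by linarith [hy.2]⟩
  have hconst : g t = g 0 := by
    have hcont : ContinuousOn g (Set.Icc 0 t) := fun y hy =>
      ((hg y (hts hy)).continuousAt).continuousWithinAt
    have hderiv : ∀ y ∈ Set.Ico (0:ℝ) t, HasDerivWithinAt g 0 (Set.Ici y) y := fun y hy =>
      (hg y (hts ⟨hy.1, hy.2.le⟩)).hasDerivWithinAt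
    exact constant_of_has_deriv_right_zero hcont hderiv t (Set.right_mem_Icc.2 ht0)
  have hf0 : f 0 = 1 := by
    have hfe : f 0 = ∑' j : ℕ, psifd d j * (0:ℝ) ^ j := rfl
    rw [hfe, tsum_eq_single 0 (fun j hj => by simp [zero_pow hj])]
    simp [psifd_zero hd]
  have h1t : 0 < 1 - t := by linarith
  have hgt : (1 - t) ^ d * f t = 1 := by
    have : g 0 = 1 := by simp [hgdef, hf0, Real.one_rpow]
    rw [← hconst] at this
    simpa [hgdef] using this
  have hpow : (0:ℝ) < (1 - t) ^ d := Real.rpow_pos_of_pos h1t d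
  rw [Real.rpow_neg h1t.le]
  field_simp at hgt ⊢
  linarith [hgt]


open MeasureTheory in
lemma gauss_key {d₁ d₂ : ℝ} (hd₁0 : 0 < d₁) (hd₁ : d₁ < 1/2) (hd₂0 : 0 < d₂) (hd₂ : d₂ < 1/2) :
    Summable (fun j : ℕ => psifd d₁ j * psifd d₂ j) ∧
    ∑' j : ℕ, psifd d₁ j * psifd d₂ j
      = Real.Gamma (1 - d₁ - d₂) / (Real.Gamma (1 - d₁) * Real.Gamma (1 - d₂)) := by
  have h1d₁ : 0 < 1 - d₁ := by linarith
  have h1d₂ : 0 < 1 - d₂ := by linarith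
  have h1dd : 0 < 1 - d₁ - d₂ := by linarith
  set c : ℝ := Real.Gamma d₁ * Real.Gamma (1 - d₁) with hcdef
  have hc0 : 0 < c := mul_pos (Real.Gamma_pos_of_pos hd₁0) (Real.Gamma_pos_of_pos h1d₁)
  set R : ℝ := Real.Gamma (1 - d₁ - d₂) / (Real.Gamma (1 - d₁) * Real.Gamma (1 - d₂)) with hRdef
  have hR0 : 0 ≤ R := by
    have := Real.Gamma_pos_of_pos h1dd
    have := Real.Gamma_pos_of_pos h1d₁
    have := Real.Gamma_pos_of_pos h1d₂
    positivity
  -- integral representation of psifd d₁ j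
  have hrep : ∀ j : ℕ, psifd d₁ j
      = (∫ t in Set.Ioo (0:ℝ) 1, t ^ ((j:ℝ) + d₁ - 1) * (1-t) ^ (-d₁)) / c := by
    intro j
    have hb := betaEval (a := (j:ℝ) + d₁) (b := 1 - d₁) (by positivity) h1d₁
    have e1 : (1 - d₁) - 1 = -d₁ := by ring
    have e2 : ((j:ℝ) + d₁) + (1 - d₁) = (j:ℝ) + 1 := by ring
    rw [e1, e2] at hb
    rw [hb]
    unfold psifd
    rw [hcdef]
    have g1 : Real.Gamma ((j:ℝ)+1) ≠ 0 := (Real.Gamma_pos_of_pos (by positivity)).ne'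
    have g2 : Real.Gamma d₁ ≠ 0 := (Real.Gamma_pos_of_pos hd₁0).ne'
    have g3 : Real.Gamma (1-d₁) ≠ 0 := (Real.Gamma_pos_of_pos h1d₁).ne'
    field_simp
  -- the ENNReal-valued integrand
  set F : ℕ → ℝ → ℝ := fun j t => (psifd d₂ j / c) * (t ^ ((j:ℝ) + d₁ - 1) * (1-t) ^ (-d₁))
    with hFdef
  have hF_nonneg : ∀ j : ℕ, ∀ t ∈ Set.Ioo (0:ℝ) 1, 0 ≤ F j t := by
    intro j t ht
    have h1 : (0:ℝ) < t := ht.1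
    have h2 : (0:ℝ) < 1 - t := by linarith [ht.2]
    have := (psifd_pos hd₂0 j).le
    have := Real.rpow_nonneg h1.le ((j:ℝ) + d₁ - 1)
    have := Real.rpow_nonneg h2.le (-d₁)
    positivity
  have hF_meas : ∀ j : ℕ, AEMeasurable (fun t => ENNReal.ofReal (F j t))
      (volume.restrict (Set.Ioo (0:ℝ) 1)) := by
    intro j
    apply Measurable.aemeasurable
    simp only [hFdef]
    fun_prop
  have hF_int : ∀ j : ℕ, IntegrableOn (F j) (Set.Ioo (0:ℝ) 1) volume := by
    intro j
    have hb := betaIntegrableOn_s9 (a := (j:ℝ) + d₁) (b := 1 - d₁) (by positivity) h1d₁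
    have e1 : (1 - d₁) - 1 = -d₁ := by ring
    have e2 : ((j:ℝ) + d₁) - 1 = (j:ℝ) + d₁ - 1 := by ring
    rw [e1, e2] at hb
    exact hb.const_mul _
  -- Step A
  have stepA : ∀ j : ℕ, ENNReal.ofReal (psifd d₁ j * psifd d₂ j)
      = ∫⁻ t in Set.Ioo (0:ℝ) 1, ENNReal.ofReal (F j t) := by
    intro j
    have h1 : psifd d₁ j * psifd d₂ j = ∫ t in Set.Ioo (0:ℝ) 1, F j t := by
      rw [hrep j, hFdef]
      rw [MeasureTheory.integral_const_mul]
      field_simp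
    rw [h1]
    apply MeasureTheory.ofReal_integral_eq_lintegral_ofReal (hF_int j)
    filter_upwards [ae_restrict_mem measurableSet_Ioo] with t ht
    exact hF_nonneg j t ht
  -- Step B : swap sum and lintegral
  have stepB : ∑' j : ℕ, ENNReal.ofReal (psifd d₁ j * psifd d₂ j)
      = ∫⁻ t in Set.Ioo (0:ℝ) 1, ∑' j : ℕ, ENNReal.ofReal (F j t) := by
    simp_rw [stepA]
    exact (MeasureTheory.lintegral_tsum hF_meas).symm
  -- Step C : pointwise evaluation of the inner sum
  have stepC : ∫⁻ t in Set.Ioo (0:ℝ) 1, ∑' j : ℕ, ENNReal.ofReal (F j t)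
      = ∫⁻ t in Set.Ioo (0:ℝ) 1,
          ENNReal.ofReal ((t ^ (d₁ - 1) * (1-t) ^ ((1 - d₁ - d₂) - 1)) / c) := by
    apply setLIntegral_congr_fun measurableSet_Ioo
    intro t ht
    have ht0 : (0:ℝ) < t := ht.1
    have ht1 : t < 1 := ht.2
    have h1t : (0:ℝ) < 1 - t := by linarith
    set g : ℝ := (1/c) * (t ^ (d₁ - 1) * (1-t) ^ (-d₁)) with hgdef
    have hg0 : 0 ≤ g := by
      have := Real.rpow_nonneg ht0.le (d₁ - 1)
      have := Real.rpow_nonneg h1t.le (-d₁)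
      positivity
    have hFg : ∀ j : ℕ, F j t = g * (psifd d₂ j * t ^ j) := by
      intro j
      simp only [hFdef, hgdef]
      have he : t ^ ((j:ℝ) + d₁ - 1) = t ^ (j:ℕ) * t ^ (d₁ - 1) := by
        rw [← Real.rpow_natCast t j, ← Real.rpow_add ht0]
        ring_nf
      rw [he]
      field_simp
    have hsum2 : Summable (fun j : ℕ => psifd d₂ j * t ^ j) :=
      summable_psifd_mul_pow hd₂0 (by rw [abs_of_pos ht0]; exact ht1)
    have hsumg : Summable (fun j : ℕ => g * (psifd d₂ j * t ^ j)) := hsum2.mul_left g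
    have hnn : ∀ j : ℕ, 0 ≤ g * (psifd d₂ j * t ^ j) := by
      intro j
      have := (psifd_pos hd₂0 j).le
      have : (0:ℝ) ≤ t ^ j := by positivity
      have := (psifd_pos hd₂0 j).le
      positivity
    calc ∑' j : ℕ, ENNReal.ofReal (F j t)
        = ∑' j : ℕ, ENNReal.ofReal (g * (psifd d₂ j * t ^ j)) := by
          apply tsum_congr; intro j; rw [hFg j]
      _ = ENNReal.ofReal (∑' j : ℕ, g * (psifd d₂ j * t ^ j)) :=
          (ENNReal.ofReal_tsum_of_nonneg hnn hsumg).symm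
      _ = ENNReal.ofReal (g * ((1-t) ^ (-d₂))) := by
          rw [hsum2.tsum_mul_left g, psifd_hasSum hd₂0 ht0.le ht1]
      _ = ENNReal.ofReal ((t ^ (d₁ - 1) * (1-t) ^ ((1 - d₁ - d₂) - 1)) / c) := by
          congr 1
          rw [hgdef]
          have : (1-t) ^ (-d₁) * (1-t) ^ (-d₂) = (1-t) ^ ((1 - d₁ - d₂) - 1) := by
            rw [← Real.rpow_add h1t]
            ring_nf
          field_simp
          rw [← this]
  -- Step D : evaluate the final integral
  have stepD : ∫⁻ t in Set.Ioo (0:ℝ) 1,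
        ENNReal.ofReal ((t ^ (d₁ - 1) * (1-t) ^ ((1 - d₁ - d₂) - 1)) / c)
      = ENNReal.ofReal R := by
    have hint : IntegrableOn (fun t : ℝ => (t ^ (d₁ - 1) * (1-t) ^ ((1 - d₁ - d₂) - 1)) / c)
        (Set.Ioo (0:ℝ) 1) volume := by
      have := (betaIntegrableOn_s9 hd₁0 h1dd).div_const c
      exact this
    rw [← MeasureTheory.ofReal_integral_eq_lintegral_ofReal hint]
    · congr 1
      rw [MeasureTheory.integral_div, betaEval hd₁0 h1dd, hRdef]
      have e : d₁ + (1 - d₁ - d₂) = 1 - d₂ := by ring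
      rw [e, hcdef]
      have g1 : Real.Gamma d₁ ≠ 0 := (Real.Gamma_pos_of_pos hd₁0).ne'
      have g2 : Real.Gamma (1-d₁) ≠ 0 := (Real.Gamma_pos_of_pos h1d₁).ne'
      have g3 : Real.Gamma (1-d₂) ≠ 0 := (Real.Gamma_pos_of_pos h1d₂).ne'
      field_simp
    · filter_upwards [ae_restrict_mem measurableSet_Ioo] with t ht
      have ht0 : (0:ℝ) < t := ht.1
      have h1t : (0:ℝ) < 1 - t := by linarith [ht.2]
      have := Real.rpow_nonneg ht0.le (d₁ - 1)
      have := Real.rpow_nonneg h1t.le ((1 - d₁ - d₂) - 1)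
      positivity
  have total : ∑' j : ℕ, ENNReal.ofReal (psifd d₁ j * psifd d₂ j) = ENNReal.ofReal R := by
    rw [stepB, stepC, stepD]
  have hterm_nonneg : ∀ j : ℕ, 0 ≤ psifd d₁ j * psifd d₂ j := fun j =>
    (mul_pos (psifd_pos hd₁0 j) (psifd_pos hd₂0 j)).le
  have hsummable : Summable (fun j : ℕ => psifd d₁ j * psifd d₂ j) := by
    have hne : (∑' j : ℕ, ENNReal.ofReal (psifd d₁ j * psifd d₂ j)) ≠ ⊤ := by
      rw [total]; exact ENNReal.ofReal_ne_top
    have h := ENNReal.summable_toReal hne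
    refine h.congr (fun j => ?_)
    rw [ENNReal.toReal_ofReal (hterm_nonneg j)]
  refine ⟨hsummable, ?_⟩
  have h1 : ENNReal.ofReal (∑' j : ℕ, psifd d₁ j * psifd d₂ j) = ENNReal.ofReal R := by
    rw [ENNReal.ofReal_tsum_of_nonneg hterm_nonneg hsummable]
    exact total
  exact (ENNReal.ofReal_eq_ofReal_iff (tsum_nonneg hterm_nonneg) hR0).mp h1



open Real

/-- Variance / lag-0 covariance identity: For `0 < d₁, d₂ < 1/2`, with
`ψ_j(d) = Γ(j+d)/(Γ(j+1)·Γ(d))`, one has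
`∑_{j=0}^∞ ψ_j(d₁)·ψ_j(d₂) = Γ(1-d₁-d₂)/(Γ(1-d₁)·Γ(1-d₂))`; in particular
`∑_{j=0}^∞ ψ_j(d₁)² = Γ(1-2d₁)/(Γ(1-d₁))²`. -/
theorem variance_identity (d₁ d₂ : ℝ)
    (hd₁0 : 0 < d₁) (hd₁ : d₁ < 1/2) (hd₂0 : 0 < d₂) (hd₂ : d₂ < 1/2) :
    (∑' j : ℕ,
        (Real.Gamma (j + d₁) / (Real.Gamma (j + 1) * Real.Gamma d₁)) *
          (Real.Gamma (j + d₂) / (Real.Gamma (j + 1) * Real.Gamma d₂)))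
      = Real.Gamma (1 - d₁ - d₂) / (Real.Gamma (1 - d₁) * Real.Gamma (1 - d₂)) ∧
    (∑' j : ℕ,
        (Real.Gamma (j + d₁) / (Real.Gamma (j + 1) * Real.Gamma d₁)) ^ 2)
      = Real.Gamma (1 - 2 * d₁) / (Real.Gamma (1 - d₁)) ^ 2 := by
  obtain ⟨_, h12⟩ := gauss_key hd₁0 hd₁ hd₂0 hd₂
  obtain ⟨_, h11⟩ := gauss_key hd₁0 hd₁ hd₁0 hd₁
  constructor
  · exact h12
  · have hc : ∀ j : ℕ,
        (Real.Gamma (j + d₁) / (Real.Gamma (j + 1) * Real.Gamma d₁)) ^ 2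
          = psifd d₁ j * psifd d₁ j := fun j => by rw [pow_two]; rfl
    rw [tsum_congr hc, h11, show (1:ℝ) - 2*d₁ = 1 - d₁ - d₁ by ring, pow_two]
end

section
/- (Hyperbolic decay to zero) Let d₁, d₂ be real numbers with 0 < d₁ < 1/2 and 0 < d₂ < 1/2, and for natural h define γ(h) = Γ(1-d₁-d₂)·Γ(d₂+h) / (Γ(d₂)·Γ(1-d₂)·Γ(1+h-d₁)). Then γ(h) > 0 for every h, and γ(h) → 0 as h → ∞. -/
open Filter Real

/-- Hyperbolic decay to zero: For `0 < d₁, d₂ < 1/2`, the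
autocovariance `γ(h) = Γ(1-d₁-d₂)·Γ(d₂+h)/(Γ(d₂)·Γ(1-d₂)·Γ(1+h-d₁))` is
positive for every `h` and tends to `0` as `h → ∞`. -/
theorem autocovariance_decay (d₁ d₂ : ℝ)
    (hd₁0 : 0 < d₁) (hd₁ : d₁ < 1/2) (hd₂0 : 0 < d₂) (hd₂ : d₂ < 1/2)
    (γ : ℕ → ℝ)
    (hγ : ∀ h : ℕ, γ h = Real.Gamma (1 - d₁ - d₂) * Real.Gamma (d₂ + h) /
      (Real.Gamma d₂ * Real.Gamma (1 - d₂) * Real.Gamma (1 + h - d₁))) :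
    (∀ h : ℕ, 0 < γ h) ∧ Tendsto γ atTop (nhds 0) := by
  set c : ℝ := 1 - d₁ - d₂ with hc
  have hc0 : 0 < c := by simp [hc]; linarith
  have hpos : ∀ h : ℕ, 0 < γ h := by
    intro h
    have hh : (0:ℝ) ≤ (h:ℝ) := Nat.cast_nonneg h
    rw [hγ]
    apply div_pos
    · exact mul_pos (Real.Gamma_pos_of_pos hc0)
        (Real.Gamma_pos_of_pos (by linarith))
    · exact mul_pos (mul_pos (Real.Gamma_pos_of_pos hd₂0)
        (Real.Gamma_pos_of_pos (by linarith))) (Real.Gamma_pos_of_pos (by linarith))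
  refine ⟨hpos, ?_⟩
  have hrec : ∀ h : ℕ, γ (h+1) = γ h * ((d₂ + h) / (1 + h - d₁)) := by
    intro h
    have hh : (0:ℝ) ≤ (h:ℝ) := Nat.cast_nonneg h
    have h1 : (0:ℝ) < d₂ + h := by linarith
    have h2 : (0:ℝ) < 1 + (h:ℝ) - d₁ := by linarith
    rw [hγ, hγ]
    push_cast
    have e1 : d₂ + ((h:ℝ)+1) = (d₂ + h) + 1 := by ring
    have e2 : 1 + ((h:ℝ)+1) - d₁ = (1 + h - d₁) + 1 := by ring
    rw [e1, e2, Real.Gamma_add_one h1.ne', Real.Gamma_add_one h2.ne']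
    have g1 := (Real.Gamma_pos_of_pos hd₂0).ne'
    have g2 := (Real.Gamma_pos_of_pos (show (0:ℝ) < 1 - d₂ by linarith)).ne'
    have g3 := (Real.Gamma_pos_of_pos h2).ne'
    field_simp
  set S : ℕ → ℝ := fun n => ∑ k ∈ Finset.range n, (1:ℝ)/(k+1) with hS
  have hb : ∀ h : ℕ, γ h ≤ γ 0 * Real.exp (-c * S h) := by
    intro h
    induction h with
    | zero => simp [hS]
    | succ n ih =>
      have hh : (0:ℝ) ≤ (n:ℝ) := Nat.cast_nonneg n
      have h2 : (0:ℝ) < 1 + (n:ℝ) - d₁ := by linarith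
      have hr : (d₂ + n) / (1 + n - d₁) ≤ Real.exp (-(c/(n+1))) := by
        have e : (d₂ + (n:ℝ)) / (1 + n - d₁) = 1 - c/(1 + n - d₁) := by
          rw [hc]; field_simp; ring
        rw [e]
        have step1 : c/(1 + (n:ℝ)) ≤ c/(1 + n - d₁) := by
          apply div_le_div_of_nonneg_left hc0.le h2; linarith
        have step2 : 1 - c/(1 + (n:ℝ)) ≤ Real.exp (-(c/(n+1))) := by
          have := Real.add_one_le_exp (-(c/((n:ℝ)+1)))
          have e2 : (1:ℝ) + (n:ℝ) = (n:ℝ) + 1 := by ring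
          rw [e2]; linarith
        linarith
      have hSucc : S (n+1) = S n + 1/((n:ℝ)+1) := by
        simp [hS, Finset.sum_range_succ]
      calc γ (n+1) = γ n * ((d₂ + n) / (1 + n - d₁)) := hrec n
        _ ≤ (γ 0 * Real.exp (-c * S n)) * Real.exp (-(c/(n+1))) := by
            apply mul_le_mul ih hr (div_nonneg (by linarith) h2.le)
              (mul_nonneg (hpos 0).le (Real.exp_nonneg _))
        _ = γ 0 * Real.exp (-c * S (n+1)) := by
            rw [hSucc, mul_assoc, ← Real.exp_add]; ring_nf
  have hStend : Tendsto S atTop atTop := tendsto_sum_range_one_div_nat_succ_atTop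
  have htend : Tendsto (fun h => γ 0 * Real.exp (-c * S h)) atTop (nhds 0) := by
    have h1 : Tendsto (fun h => -c * S h) atTop atBot :=
      hStend.const_mul_atTop_of_neg (by linarith)
    have h2 : Tendsto (fun h => Real.exp (-c * S h)) atTop (nhds 0) :=
      Real.tendsto_exp_atBot.comp h1
    simpa using h2.const_mul (γ 0)
  exact squeeze_zero (fun h => (hpos h).le) hb htend
end

section
/- (Non-summability of the autocorrelations / long memory) Let d₁, d₂ be real numbers with 0 < d₁ < 1/2 and 0 < d₂ < 1/2, and for natural h define γ(h) = Γ(1-d₁-d₂)·Γ(d₂+h) / (Γ(d₂)·Γ(1-d₂)·Γ(1+h-d₁)). Then the function h ↦ |γ(h)| is NOT summable over the natural numbers; that is, ∑_{h=0}^∞ |γ(h)| = ∞. -/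
open Real

/-- Non-summability of the autocorrelations / long memory: For
`0 < d₁, d₂ < 1/2`, the autocovariance
`γ(h) = Γ(1-d₁-d₂)·Γ(d₂+h)/(Γ(d₂)·Γ(1-d₂)·Γ(1+h-d₁))` is not absolutely
summable: `∑_{h=0}^∞ |γ(h)| = ∞`. -/
theorem autocovariance_not_summable (d₁ d₂ : ℝ)
    (hd₁0 : 0 < d₁) (hd₁ : d₁ < 1/2) (hd₂0 : 0 < d₂) (hd₂ : d₂ < 1/2)
    (γ : ℕ → ℝ)
    (hγ : ∀ h : ℕ, γ h = Real.Gamma (1 - d₁ - d₂) * Real.Gamma (d₂ + h) /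
      (Real.Gamma d₂ * Real.Gamma (1 - d₂) * Real.Gamma (1 + h - d₁))) :
    ¬ Summable (fun h : ℕ => |γ h|) := by
  -- positivity of all the Gamma values
  have hA : 0 < Real.Gamma (1 - d₁ - d₂) := Real.Gamma_pos_of_pos (by linarith)
  have hB : 0 < Real.Gamma d₂ := Real.Gamma_pos_of_pos hd₂0
  have hC : 0 < Real.Gamma (1 - d₂) := Real.Gamma_pos_of_pos (by linarith)
  have hD : ∀ h : ℕ, 0 < Real.Gamma (d₂ + h) := fun h =>
    Real.Gamma_pos_of_pos (by positivity)
  have hE : ∀ h : ℕ, 0 < Real.Gamma (1 + h - d₁) := fun h =>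
    Real.Gamma_pos_of_pos (by have : (0:ℝ) ≤ h := Nat.cast_nonneg h; linarith)
  have hpos : ∀ h : ℕ, 0 < γ h := by
    intro h; rw [hγ h]
    exact div_pos (mul_pos hA (hD h)) (mul_pos (mul_pos hB hC) (hE h))
  -- recurrence: γ(h+1) * (1+h-d₁) = γ h * (d₂+h)
  have hrec : ∀ h : ℕ, γ (h+1) * (1 + h - d₁) = γ h * (d₂ + h) := by
    intro h
    have h1 : (d₂ + (↑(h+1):ℝ)) = (d₂ + h) + 1 := by push_cast; ring
    have h2 : (1 + (↑(h+1):ℝ) - d₁) = (1 + h - d₁) + 1 := by push_cast; ring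
    have hDd : d₂ + (h:ℝ) ≠ 0 := by positivity
    have hEd : 1 + (h:ℝ) - d₁ ≠ 0 := by
      have : (0:ℝ) ≤ h := Nat.cast_nonneg h; intro e; linarith [e]
    have hEd' : 1 + (h:ℝ) - d₁ ≠ 0 := hEd
    rw [hγ (h+1), hγ h, h1, h2, Real.Gamma_add_one hDd, Real.Gamma_add_one hEd]
    field_simp [hB.ne', hC.ne', (hE h).ne', hEd]
  -- choose N with N ≥ 1/(d₁+d₂)
  obtain ⟨N, hN⟩ := exists_nat_ge ((1:ℝ)/(d₁+d₂))
  have hsum : 0 < d₁ + d₂ := by linarith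
  have hN1 : (1:ℝ) ≤ (N:ℝ) * (d₁ + d₂) := by
    rw [div_le_iff₀ hsum] at hN; linarith
  set C : ℝ := γ N * (N + 1) with hCdef
  have hCpos : 0 < C := mul_pos (hpos N) (by positivity)
  -- key bound: for h ≥ N, γ h * (h+1) ≥ C
  have key : ∀ h : ℕ, N ≤ h → C ≤ γ h * (h + 1) := by
    intro h hh
    induction h, hh using Nat.le_induction with
    | base => exact le_refl _
    | succ h hh ih =>
      have hcast : (N:ℝ) ≤ h := Nat.cast_le.mpr hh
      have hxd : (1:ℝ) ≤ (h:ℝ) * (d₁ + d₂) := by nlinarith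
      have hEh : (0:ℝ) < 1 + h - d₁ := by
        have : (0:ℝ) ≤ h := Nat.cast_nonneg h; linarith
      have hrech := hrec h
      have hp := hpos h
      have hp1 := hpos (h+1)
      have hcoef : (1 + (h:ℝ) - d₁) * ((h:ℝ) + 1) ≤ (d₂ + h) * ((h:ℝ) + 2) := by
        nlinarith
      have step : γ h * ((h:ℝ) + 1) ≤ γ (h+1) * ((h:ℝ) + 2) := by
        have h1 : γ h * ((1 + (h:ℝ) - d₁) * ((h:ℝ)+1)) ≤ γ h * ((d₂ + h) * ((h:ℝ)+2)) :=
          mul_le_mul_of_nonneg_left hcoef (le_of_lt hp)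
        have h2 : γ h * ((d₂ + h) * ((h:ℝ)+2)) = γ (h+1) * (1 + h - d₁) * ((h:ℝ)+2) := by
          rw [hrech]; ring
        have h3 : γ h * ((1 + (h:ℝ) - d₁) * ((h:ℝ)+1)) = (1 + (h:ℝ) - d₁) * (γ h * ((h:ℝ)+1)) := by ring
        rw [h3, h2] at h1
        have h4 : γ (h+1) * (1 + (h:ℝ) - d₁) * ((h:ℝ)+2) = (1 + (h:ℝ) - d₁) * (γ (h+1) * ((h:ℝ)+2)) := by ring
        rw [h4] at h1
        exact le_of_mul_le_mul_left h1 hEh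
      have : ((h:ℝ)+2) = ((↑(h+1):ℝ) + 1) := by push_cast; ring
      rw [this] at step
      linarith
  -- conclude: compare with harmonic series
  intro hS
  have hSg : Summable γ := summable_abs_iff.mp hS
  have hshift : Summable (fun h : ℕ => γ (h + N)) := (summable_nat_add_iff N).mpr hSg
  have hcomp : Summable (fun h : ℕ => C / ((h:ℝ) + N + 1)) := by
    refine Summable.of_nonneg_of_le (fun h => by positivity) (fun h => ?_) hshift
    have hk := key (h + N) (Nat.le_add_left _ _)
    have hx : (0:ℝ) < (h:ℝ) + N + 1 := by positivity
    rw [div_le_iff₀ hx]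
    push_cast at hk ⊢
    linarith
  have hone : Summable (fun h : ℕ => (1:ℝ) / ((h:ℝ) + N + 1)) := by
    have := hcomp.mul_left C⁻¹
    refine this.congr fun h => ?_
    field_simp
  have hone' : Summable (fun h : ℕ => (1:ℝ) / ((h + (N+1) : ℕ) : ℝ)) := by
    refine hone.congr fun h => ?_
    push_cast; ring_nf
  have : Summable (fun n : ℕ => (1:ℝ) / (n:ℝ)) :=
    (summable_nat_add_iff (N+1)).mp hone'
  exact Real.not_summable_one_div_natCast this
end
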